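/- arXiv:2305.15850 — 4 statements merged into one kernel-verified Lean document; each statement's English description precedes it below -/
import Mathlib

section
/- Let η₁,…,η_m be i.i.d. with P(η_k = 1/p) = p, P(η_k = 0) = 1−p, c₁,…,c_m ∈ ℝ, y_i, y_j ∈ ℝ (use coefficients c_r^{(i)}, c_r^{(j)} for two samples). For fixed k ∈ [m], with e_i^η = ∑_r η_r c_r^{(i)} − y_i and e_{i,∖k} = ∑_{r≠k} c_r^{(i)} − y_i, the covariance satisfies Cov(e_i^η η_k, e_j^η η_k) = (1/p − 1)·(e_{i,∖k} + (1/p)c_k^{(i)})·(e_{j,∖k} + (1/p)c_k^{(j)}) + (1/p² − 1/p)·∑_{r≠k} c_r^{(i)} c_r^{(j)}. -/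
open MeasureTheory ProbabilityTheory Finset

/-- Diagonal covariance of the dropout noise: for a fixed neuron `k`,
`Cov(e_i^η η_k, e_j^η η_k)
  = (1/p − 1)(e_{i,\k} + c_k⁽ⁱ⁾/p)(e_{j,\k} + c_k⁽ʲ⁾/p)
    + (1/p² − 1/p) ∑_{r ≠ k} c_r⁽ⁱ⁾ c_r⁽ʲ⁾`. -/
theorem stmt_3 {Ω : Type*} [MeasurableSpace Ω] (μ : Measure Ω) [IsProbabilityMeasure μ]
    (m : ℕ) (p : ℝ) (hp : 0 < p) (hp1 : p ≤ 1)
    (η : Fin m → Ω → ℝ) (hmeas : ∀ k, Measurable (η k))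
    (hindep : iIndepFun η μ)
    (hval : ∀ k ω, η k ω = 1 / p ∨ η k ω = 0)
    (hdist : ∀ k, μ {ω | η k ω = 1 / p} = ENNReal.ofReal p)
    (ci cj : Fin m → ℝ) (yi yj : ℝ) (k : Fin m) :
    (∫ ω, (((∑ r, η r ω * ci r) - yi) * η k ω) * (((∑ r, η r ω * cj r) - yj) * η k ω) ∂μ)
      - (∫ ω, ((∑ r, η r ω * ci r) - yi) * η k ω ∂μ)
        * (∫ ω, ((∑ r, η r ω * cj r) - yj) * η k ω ∂μ)
    = (1 / p - 1) * (((∑ r ∈ univ.erase k, ci r) - yi) + (1 / p) * ci k)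
        * (((∑ r ∈ univ.erase k, cj r) - yj) + (1 / p) * cj k)
      + (1 / p ^ 2 - 1 / p) * ∑ r ∈ univ.erase k, ci r * cj r := by
  classical
  have hp0 : p ≠ 0 := ne_of_gt hp
  have hip : (0:ℝ) ≤ 1 / p := by positivity
  have h0 : ∀ r ω, 0 ≤ η r ω := by
    intro r ω; rcases hval r ω with h | h <;> rw [h] <;> positivity
  have hub : ∀ r ω, η r ω ≤ 1 / p := by
    intro r ω; rcases hval r ω with h | h <;> rw [h]
    all_goals first | exact le_refl _ | exact hip
  have hsq : ∀ r ω, η r ω * η r ω = (1 / p) * η r ω := by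
    intro r ω; rcases hval r ω with h | h <;> rw [h] <;> ring
  -- integrability of products
  have hInt1 : ∀ a, Integrable (fun ω => η a ω) μ := by
    intro a
    refine (integrable_const (1/p)).mono' (hmeas a).aestronglyMeasurable
      (ae_of_all _ fun ω => ?_)
    rw [Real.norm_eq_abs, abs_of_nonneg (h0 a ω)]; exact hub a ω
  have hInt2 : ∀ a b, Integrable (fun ω => η a ω * η b ω) μ := by
    intro a b
    refine (integrable_const ((1/p)*(1/p))).mono'
      ((hmeas a).mul (hmeas b)).aestronglyMeasurable (ae_of_all _ fun ω => ?_)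
    rw [Real.norm_eq_abs, abs_of_nonneg (mul_nonneg (h0 a ω) (h0 b ω))]
    exact mul_le_mul (hub a ω) (hub b ω) (h0 b ω) hip
  have hInt3 : ∀ a b c, Integrable (fun ω => η a ω * η b ω * η c ω) μ := by
    intro a b c
    refine (integrable_const ((1/p)*(1/p)*(1/p))).mono'
      (((hmeas a).mul (hmeas b)).mul (hmeas c)).aestronglyMeasurable
      (ae_of_all _ fun ω => ?_)
    rw [Real.norm_eq_abs, abs_of_nonneg (mul_nonneg (mul_nonneg (h0 a ω) (h0 b ω)) (h0 c ω))]
    exact mul_le_mul (mul_le_mul (hub a ω) (hub b ω) (h0 b ω) hip) (hub c ω) (h0 c ω)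
      (mul_nonneg hip hip)
  -- expectations of products over distinct indices
  have hμS : ∀ r, μ (η r ⁻¹' {1/p}) = ENNReal.ofReal p := fun r => hdist r
  have hprodInd : ∀ (T : Finset (Fin m)) (ω : Ω),
      (∏ r ∈ T, η r ω)
        = Set.indicator (⋂ r ∈ T, η r ⁻¹' {1/p}) (fun _ => (1/p)^T.card) ω := by
    intro T ω
    by_cases h : ω ∈ ⋂ r ∈ T, η r ⁻¹' {1/p}
    · rw [Set.indicator_of_mem h]
      simp only [Set.mem_iInter, Set.mem_preimage, Set.mem_singleton_iff] at h
      rw [Finset.prod_congr rfl h, Finset.prod_const]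
    · rw [Set.indicator_of_notMem h]
      simp only [Set.mem_iInter, Set.mem_preimage, Set.mem_singleton_iff, not_forall] at h
      obtain ⟨r, hrT, hr⟩ := h
      exact Finset.prod_eq_zero hrT ((hval r ω).resolve_left hr)
  have hEprod : ∀ T : Finset (Fin m), ∫ ω, ∏ r ∈ T, η r ω ∂μ = 1 := by
    intro T
    simp only [hprodInd T]
    rw [integral_indicator_const _
      (Finset.measurableSet_biInter T fun r _ => (hmeas r) (measurableSet_singleton _))]
    have hm := hindep.measure_inter_preimage_eq_mul T
      (sets := fun _ => ({1/p} : Set ℝ)) (fun i _ => measurableSet_singleton _)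
    rw [measureReal_def, hm, Finset.prod_congr rfl (fun i _ => hμS i), Finset.prod_const, ENNReal.toReal_pow,
      ENNReal.toReal_ofReal hp.le, smul_eq_mul, ← mul_pow, mul_one_div, div_self hp0, one_pow]
  have E1 : ∫ ω, η k ω ∂μ = 1 := by
    have := hEprod {k}; simpa using this
  have E2 : ∀ a, a ≠ k → ∫ ω, η a ω * η k ω ∂μ = 1 := by
    intro a ha
    have := hEprod {a, k}
    simpa [Finset.prod_pair ha] using this
  have E3 : ∀ a b, a ≠ k → b ≠ k →
      ∫ ω, η a ω * η b ω * η k ω ∂μ = if a = b then 1/p else 1 := by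
    intro a b ha hb
    by_cases hab : a = b
    · subst hab
      rw [if_pos rfl]
      calc ∫ ω, η a ω * η a ω * η k ω ∂μ = ∫ ω, (1/p) * (η a ω * η k ω) ∂μ := by
            congr 1; funext ω; rw [hsq a ω]; ring
        _ = (1/p) * ∫ ω, η a ω * η k ω ∂μ := integral_const_mul _ _
        _ = 1/p := by rw [E2 a ha, mul_one]
    · rw [if_neg hab]
      have := hEprod {a, b, k}
      have hab' : a ∉ ({b, k} : Finset (Fin m)) := by simp [hab, ha]
      have h' : ∫ ω, η a ω * (η b ω * η k ω) ∂μ = 1 := by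
        simpa [Finset.prod_insert hab', Finset.prod_pair hb] using this
      simpa only [mul_assoc] using h'
  -- sum splitting helpers
  have hmemk : k ∈ (univ : Finset (Fin m)) := Finset.mem_univ k
  have hA : ∀ (c : Fin m → ℝ) ω,
      (∑ r, η r ω * c r) = (∑ r ∈ univ.erase k, η r ω * c r) + η k ω * c k :=
    fun c ω => (Finset.sum_erase_add _ _ hmemk).symm
  have h2 : ∀ (c : Fin m → ℝ) ω, (∑ r ∈ univ.erase k, η r ω * c r) * η k ω
      = ∑ r ∈ univ.erase k, c r * (η r ω * η k ω) := by
    intro c ω; rw [Finset.sum_mul]; exact Finset.sum_congr rfl fun r _ => by ring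
  -- the two linear integrals
  have hlin : ∀ (c : Fin m → ℝ) (y : ℝ), ∫ ω, ((∑ r, η r ω * c r) - y) * η k ω ∂μ
      = (∑ r ∈ univ.erase k, c r) + ((1/p) * c k - y) := by
    intro c y
    have hpt : ∀ ω, ((∑ r, η r ω * c r) - y) * η k ω
        = (∑ r ∈ univ.erase k, c r * (η r ω * η k ω)) + ((1/p) * c k - y) * η k ω := by
      intro ω
      rw [hA c ω]
      linear_combination h2 c ω + c k * hsq k ω
    simp only [hpt]
    rw [integral_add (integrable_finset_sum _ fun r _ => (hInt2 r k).const_mul (c r))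
      ((hInt1 k).const_mul _)]
    rw [integral_finset_sum _ fun r _ => (hInt2 r k).const_mul (c r)]
    rw [integral_const_mul, E1, mul_one]
    congr 1
    refine Finset.sum_congr rfl fun r hr => ?_
    rw [integral_const_mul, E2 r (Finset.ne_of_mem_erase hr), mul_one]
  -- the quadratic integral
  have hquad : ∫ ω, (((∑ r, η r ω * ci r) - yi) * η k ω) * (((∑ r, η r ω * cj r) - yj) * η k ω) ∂μ
      = (1/p) * (((∑ r ∈ univ.erase k, ci r) + ((1/p)*ci k - yi))
            * ((∑ r ∈ univ.erase k, cj r) + ((1/p)*cj k - yj))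
          + (1/p - 1) * ∑ r ∈ univ.erase k, ci r * cj r) := by
    have hpt : ∀ ω, (((∑ r, η r ω * ci r) - yi) * η k ω) * (((∑ r, η r ω * cj r) - yj) * η k ω)
        = (1/p) * (((∑ r ∈ univ.erase k, η r ω * ci r) + ((1/p)*ci k - yi))
            * ((∑ r ∈ univ.erase k, η r ω * cj r) + ((1/p)*cj k - yj)) * η k ω) := by
      intro ω
      rw [hA ci ω, hA cj ω]
      rcases hval k ω with ht | ht <;> rw [ht] <;> ring
    simp only [hpt]
    rw [integral_const_mul]
    congr 1
    have hexp : ∀ ω, ((∑ r ∈ univ.erase k, η r ω * ci r) + ((1/p)*ci k - yi))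
          * ((∑ r ∈ univ.erase k, η r ω * cj r) + ((1/p)*cj k - yj)) * η k ω
        = (∑ r ∈ univ.erase k, ∑ s ∈ univ.erase k, (ci r * cj s) * (η r ω * η s ω * η k ω))
          + (((1/p)*cj k - yj) * (∑ r ∈ univ.erase k, ci r * (η r ω * η k ω))
            + (((1/p)*ci k - yi) * (∑ s ∈ univ.erase k, cj s * (η s ω * η k ω))
              + (((1/p)*ci k - yi) * ((1/p)*cj k - yj)) * η k ω)) := by
      intro ω
      have hd : (∑ r ∈ univ.erase k, η r ω * ci r) * (∑ s ∈ univ.erase k, η s ω * cj s) * η k ω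
          = ∑ r ∈ univ.erase k, ∑ s ∈ univ.erase k, (ci r * cj s) * (η r ω * η s ω * η k ω) := by
        rw [Finset.sum_mul_sum, Finset.sum_mul]
        refine Finset.sum_congr rfl fun r _ => ?_
        rw [Finset.sum_mul]
        exact Finset.sum_congr rfl fun s _ => by ring
      linear_combination hd + ((1/p)*cj k - yj) * h2 ci ω + ((1/p)*ci k - yi) * h2 cj ω
    simp only [hexp]
    have IA : Integrable (fun ω => ∑ r ∈ univ.erase k, ∑ s ∈ univ.erase k,
        (ci r * cj s) * (η r ω * η s ω * η k ω)) μ :=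
      integrable_finset_sum _ fun r _ => integrable_finset_sum _ fun s _ =>
        (hInt3 r s k).const_mul _
    have IB : Integrable (fun ω => ((1/p)*cj k - yj)
        * (∑ r ∈ univ.erase k, ci r * (η r ω * η k ω))) μ :=
      (integrable_finset_sum _ fun r _ => (hInt2 r k).const_mul _).const_mul _
    have IC : Integrable (fun ω => ((1/p)*ci k - yi)
        * (∑ s ∈ univ.erase k, cj s * (η s ω * η k ω))) μ :=
      (integrable_finset_sum _ fun s _ => (hInt2 s k).const_mul _).const_mul _
    have ID : Integrable (fun ω => (((1/p)*ci k - yi) * ((1/p)*cj k - yj)) * η k ω) μ :=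
      (hInt1 k).const_mul _
    have ICD : Integrable (fun ω => ((1/p)*ci k - yi)
        * (∑ s ∈ univ.erase k, cj s * (η s ω * η k ω))
        + (((1/p)*ci k - yi) * ((1/p)*cj k - yj)) * η k ω) μ := IC.add ID
    have IBCD : Integrable (fun ω => ((1/p)*cj k - yj)
        * (∑ r ∈ univ.erase k, ci r * (η r ω * η k ω))
        + (((1/p)*ci k - yi) * (∑ s ∈ univ.erase k, cj s * (η s ω * η k ω))
          + (((1/p)*ci k - yi) * ((1/p)*cj k - yj)) * η k ω)) μ := IB.add ICD
    rw [integral_add IA IBCD, integral_add IB ICD, integral_add IC ID]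
    have hDS : ∫ ω, ∑ r ∈ univ.erase k, ∑ s ∈ univ.erase k,
          (ci r * cj s) * (η r ω * η s ω * η k ω) ∂μ
        = (∑ r ∈ univ.erase k, ci r) * (∑ r ∈ univ.erase k, cj r)
          + (1/p - 1) * ∑ r ∈ univ.erase k, ci r * cj r := by
      rw [integral_finset_sum _ fun r _ => integrable_finset_sum _ fun s _ =>
        (hInt3 r s k).const_mul _]
      have hrow : ∀ r ∈ univ.erase k, ∫ ω, ∑ s ∈ univ.erase k,
            (ci r * cj s) * (η r ω * η s ω * η k ω) ∂μ
          = (∑ s ∈ univ.erase k, ci r * cj s) + (1/p - 1) * (ci r * cj r) := by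
        intro r hr
        rw [integral_finset_sum _ fun s _ => (hInt3 r s k).const_mul _]
        have h' : ∀ s ∈ univ.erase k, ∫ ω, (ci r * cj s) * (η r ω * η s ω * η k ω) ∂μ
            = ci r * cj s + (if s = r then (1/p - 1) * (ci r * cj s) else 0) := by
          intro s hs
          rw [integral_const_mul, E3 r s (Finset.ne_of_mem_erase hr) (Finset.ne_of_mem_erase hs)]
          by_cases h : r = s
          · subst h; rw [if_pos rfl, if_pos rfl]; ring
          · rw [if_neg h, if_neg fun hh => h hh.symm]; ring
        rw [Finset.sum_congr rfl h', Finset.sum_add_distrib,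
          Finset.sum_ite_eq' (univ.erase k) r, if_pos hr]
      rw [Finset.sum_congr rfl hrow, Finset.sum_add_distrib, Finset.sum_mul_sum,
        Finset.mul_sum]
    have hB : ∫ ω, ((1/p)*cj k - yj) * (∑ r ∈ univ.erase k, ci r * (η r ω * η k ω)) ∂μ
        = ((1/p)*cj k - yj) * (∑ r ∈ univ.erase k, ci r) := by
      rw [integral_const_mul]
      congr 1
      rw [integral_finset_sum _ fun r _ => (hInt2 r k).const_mul _]
      refine Finset.sum_congr rfl fun r hr => ?_
      rw [integral_const_mul, E2 r (Finset.ne_of_mem_erase hr), mul_one]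
    have hC : ∫ ω, ((1/p)*ci k - yi) * (∑ s ∈ univ.erase k, cj s * (η s ω * η k ω)) ∂μ
        = ((1/p)*ci k - yi) * (∑ s ∈ univ.erase k, cj s) := by
      rw [integral_const_mul]
      congr 1
      rw [integral_finset_sum _ fun s _ => (hInt2 s k).const_mul _]
      refine Finset.sum_congr rfl fun s hs => ?_
      rw [integral_const_mul, E2 s (Finset.ne_of_mem_erase hs), mul_one]
    have hD : ∫ ω, (((1/p)*ci k - yi) * ((1/p)*cj k - yj)) * η k ω ∂μ
        = ((1/p)*ci k - yi) * ((1/p)*cj k - yj) := by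
      rw [integral_const_mul, E1, mul_one]
    rw [hDS, hB, hC, hD]
    ring
  rw [hquad, hlin ci yi, hlin cj yj]
  ring
end

section
/- Let η₁,…,η_m be i.i.d. with P(η_k = 1/p) = p, P(η_k = 0) = 1−p, and let c₁,…,c_m ∈ ℝ, y_i, y_j ∈ ℝ with errors e_i^η = ∑_r η_r c_r^{(i)} − y_i. For k ≠ r, Cov(e_i^η η_k, e_j^η η_r) = (1/p − 1)·∑_{k'≠k, k'≠r} c_{k'}^{(i)} c_{k'}^{(j)} + (1/p − 1)·c_k^{(j)} e_{i,∖k,∖r} + (1/p − 1)·c_r^{(i)} e_{j,∖k,∖r} + (1/p² − 1/p)·(c_r^{(i)} c_r^{(j)} + c_k^{(i)} c_k^{(j)}) + (1/p² − 1)·c_r^{(i)} c_k^{(j)}, where e_{i,∖k,∖r} := ∑_{l≠k,l≠r} c_l^{(i)} − y_i. -/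
open MeasureTheory ProbabilityTheory Finset

section helpers
variable {Ω : Type*} [MeasurableSpace Ω] {μ : Measure Ω} [IsProbabilityMeasure μ]
  {m : ℕ} {p : ℝ} {η : Fin m → Ω → ℝ}

lemma eta_bd (hp : 0 < p) (hval : ∀ k ω, η k ω = 1 / p ∨ η k ω = 0) (s : Fin m) (ω : Ω) :
    |η s ω| ≤ 1 / p := by
  rcases hval s ω with h | h <;> rw [h]
  · rw [abs_of_nonneg (by positivity)]
  · simp; positivity

lemma int_bdd (f : Ω → ℝ) (C : ℝ) (hf : Measurable f) (h : ∀ ω, |f ω| ≤ C) :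
    Integrable f μ :=
  Integrable.mono' (integrable_const C) hf.aestronglyMeasurable
    (Filter.Eventually.of_forall (by simpa [Real.norm_eq_abs] using h))

lemma int_prod (hp : 0 < p) (hmeas : ∀ k, Measurable (η k))
    (hval : ∀ k ω, η k ω = 1 / p ∨ η k ω = 0) (T : Finset (Fin m)) :
    Integrable (fun ω => ∏ s ∈ T, η s ω) μ := by
  refine int_bdd _ ((1/p) ^ T.card) (by measurability) (fun ω => ?_)
  rw [Finset.abs_prod, ← Finset.prod_const]
  exact Finset.prod_le_prod (fun i _ => abs_nonneg _) (fun i _ => eta_bd hp hval i ω)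

lemma integral_eta (hp : 0 < p) (hmeas : ∀ k, Measurable (η k))
    (hval : ∀ k ω, η k ω = 1 / p ∨ η k ω = 0)
    (hdist : ∀ k, μ {ω | η k ω = 1 / p} = ENNReal.ofReal p) (s : Fin m) :
    ∫ ω, η s ω ∂μ = 1 := by
  have hps : (1:ℝ)/p ≠ 0 := by positivity
  have hms : MeasurableSet {ω | η s ω = 1 / p} := (hmeas s) (measurableSet_singleton _)
  have heq : η s = Set.indicator {ω | η s ω = 1 / p} (fun _ => 1 / p) := by
    funext ω
    rcases hval s ω with h | h
    · rw [h, Set.indicator_of_mem (by exact h)]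
    · rw [h, Set.indicator_of_notMem (by simp only [Set.mem_setOf_eq, h]; exact fun hc => hps hc.symm)]
  rw [heq, integral_indicator_const _ hms, measureReal_def, hdist s, ENNReal.toReal_ofReal hp.le]
  simp [smul_eq_mul]
  field_simp

lemma integral_prod_eta (hp : 0 < p) (hmeas : ∀ k, Measurable (η k))
    (hindep : iIndepFun η μ)
    (hval : ∀ k ω, η k ω = 1 / p ∨ η k ω = 0)
    (hdist : ∀ k, μ {ω | η k ω = 1 / p} = ENNReal.ofReal p) (T : Finset (Fin m)) :
    ∫ ω, ∏ s ∈ T, η s ω ∂μ = 1 := by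
  induction T using Finset.induction_on with
  | empty => simp
  | @insert a T ha ih =>
    have hind : IndepFun (η a) (∏ j ∈ T, η j) μ :=
      (hindep.indepFun_finsetProd_of_notMem hmeas ha).symm
    have h1 : (fun ω => ∏ s ∈ insert a T, η s ω) = η a * ∏ j ∈ T, η j := by
      funext ω; simp [Finset.prod_insert ha]
    have h2 : (∏ j ∈ T, η j) = (fun ω => ∏ s ∈ T, η s ω) := by
      funext ω; simp
    rw [h1, hind.integral_mul_eq_mul_integral
      (by simpa using (int_prod hp hmeas hval {a}).aestronglyMeasurable)
      (h2 ▸ (int_prod hp hmeas hval T).aestronglyMeasurable)]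
    rw [integral_eta hp hmeas hval hdist a, h2, ih]
    ring

end helpers

section helpers2
variable {Ω : Type*} [MeasurableSpace Ω] {μ : Measure Ω} [IsProbabilityMeasure μ]
  {m : ℕ} {p : ℝ} {η : Fin m → Ω → ℝ}
variable (hp : 0 < p) (hmeas : ∀ k, Measurable (η k))
  (hindep : iIndepFun η μ)
  (hval : ∀ k ω, η k ω = 1 / p ∨ η k ω = 0)
  (hdist : ∀ k, μ {ω | η k ω = 1 / p} = ENNReal.ofReal p)
include hp hmeas hindep hval hdist

lemma E2' (a b : Fin m) (hab : a ≠ b) : ∫ ω, η a ω * η b ω ∂μ = 1 := by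
  have h : ∀ ω, η a ω * η b ω = ∏ s ∈ ({a, b} : Finset (Fin m)), η s ω := fun ω => by
    rw [Finset.prod_pair hab]
  simp only [h]
  exact integral_prod_eta hp hmeas hindep hval hdist _

lemma E3' (a b c : Fin m) (hab : a ≠ b) (hac : a ≠ c) (hbc : b ≠ c) :
    ∫ ω, η a ω * (η b ω * η c ω) ∂μ = 1 := by
  have h : ∀ ω, η a ω * (η b ω * η c ω) = ∏ s ∈ ({a, b, c} : Finset (Fin m)), η s ω := fun ω => by
    rw [Finset.prod_insert (by simp [hab, hac]), Finset.prod_pair hbc]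
  simp only [h]
  exact integral_prod_eta hp hmeas hindep hval hdist _

lemma E4' (a b c d : Fin m) (hab : a ≠ b) (hac : a ≠ c) (had : a ≠ d) (hbc : b ≠ c)
    (hbd : b ≠ d) (hcd : c ≠ d) :
    ∫ ω, (η a ω * η b ω) * (η c ω * η d ω) ∂μ = 1 := by
  have h : ∀ ω, (η a ω * η b ω) * (η c ω * η d ω)
      = ∏ s ∈ ({a, b, c, d} : Finset (Fin m)), η s ω := fun ω => by
    rw [Finset.prod_insert (by simp [hab, hac, had]),
      Finset.prod_insert (by simp [hbc, hbd]), Finset.prod_pair hcd]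
    ring
  simp only [h]
  exact integral_prod_eta hp hmeas hindep hval hdist _

end helpers2

/-- Off-diagonal covariance of the dropout noise for `k ≠ r`. -/
theorem stmt_4 {Ω : Type*} [MeasurableSpace Ω] (μ : Measure Ω) [IsProbabilityMeasure μ]
    (m : ℕ) (p : ℝ) (hp : 0 < p) (hp1 : p ≤ 1)
    (η : Fin m → Ω → ℝ) (hmeas : ∀ k, Measurable (η k))
    (hindep : iIndepFun η μ)
    (hval : ∀ k ω, η k ω = 1 / p ∨ η k ω = 0)
    (hdist : ∀ k, μ {ω | η k ω = 1 / p} = ENNReal.ofReal p)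
    (ci cj : Fin m → ℝ) (yi yj : ℝ) (k r : Fin m) (hkr : k ≠ r) :
    (∫ ω, (((∑ l, η l ω * ci l) - yi) * η k ω) * (((∑ l, η l ω * cj l) - yj) * η r ω) ∂μ)
      - (∫ ω, ((∑ l, η l ω * ci l) - yi) * η k ω ∂μ)
        * (∫ ω, ((∑ l, η l ω * cj l) - yj) * η r ω ∂μ)
    = (1 / p - 1) * (∑ k' ∈ (univ.erase k).erase r, ci k' * cj k')
      + (1 / p - 1) * cj k * ((∑ l ∈ (univ.erase k).erase r, ci l) - yi)
      + (1 / p - 1) * ci r * ((∑ l ∈ (univ.erase k).erase r, cj l) - yj)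
      + (1 / p ^ 2 - 1 / p) * (ci r * cj r + ci k * cj k)
      + (1 / p ^ 2 - 1) * ci r * cj k := by
  have hp0 : p ≠ 0 := ne_of_gt hp
  set S : Finset (Fin m) := (univ.erase k).erase r with hSdef
  have hSmem : ∀ l ∈ S, l ≠ r ∧ l ≠ k := by
    intro l hl
    have h1 := Finset.mem_erase.mp hl
    exact ⟨h1.1, (Finset.mem_erase.mp h1.2).1⟩
  have hsplit : ∀ (c : Fin m → ℝ) (ω : Ω),
      (∑ l, η l ω * c l) = (∑ l ∈ S, η l ω * c l) + η r ω * c r + η k ω * c k := by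
    intro c ω
    rw [← Finset.sum_erase_add univ _ (Finset.mem_univ k),
      ← Finset.sum_erase_add (univ.erase k) _
        (Finset.mem_erase.mpr ⟨Ne.symm hkr, Finset.mem_univ r⟩)]
  have hb : ∀ (s : Fin m) (ω : Ω), |η s ω| ≤ 1 / p := eta_bd hp hval
  have hip : (0:ℝ) ≤ 1 / p := by positivity
  -- integrability
  have i1 : ∀ a, Integrable (η a) μ := fun a => int_bdd _ (1/p) (hmeas a) (hb a)
  have i2 : ∀ a b, Integrable (fun ω => η a ω * η b ω) μ := fun a b =>
    int_bdd _ ((1/p) * (1/p)) ((hmeas a).mul (hmeas b)) (fun ω => by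
      rw [abs_mul]
      exact mul_le_mul (hb a ω) (hb b ω) (abs_nonneg _) hip)
  have i3 : ∀ a b c, Integrable (fun ω => η a ω * (η b ω * η c ω)) μ := fun a b c =>
    int_bdd _ ((1/p) * ((1/p) * (1/p))) ((hmeas a).mul ((hmeas b).mul (hmeas c))) (fun ω => by
      rw [abs_mul, abs_mul]
      exact mul_le_mul (hb a ω)
        (mul_le_mul (hb b ω) (hb c ω) (abs_nonneg _) hip)
        (by positivity) hip)
  have i4 : ∀ a b c d, Integrable (fun ω => (η a ω * η b ω) * (η c ω * η d ω)) μ :=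
    fun a b c d =>
    int_bdd _ (((1/p) * (1/p)) * ((1/p) * (1/p)))
      (((hmeas a).mul (hmeas b)).mul ((hmeas c).mul (hmeas d))) (fun ω => by
      rw [abs_mul, abs_mul, abs_mul]
      exact mul_le_mul
        (mul_le_mul (hb a ω) (hb b ω) (abs_nonneg _) hip)
        (mul_le_mul (hb c ω) (hb d ω) (abs_nonneg _) hip)
        (by positivity) (by positivity))
  have hmP : ∀ (c : Fin m → ℝ), Measurable (fun ω => ∑ l ∈ S, η l ω * c l) :=
    fun c => Finset.measurable_sum _ (fun l _ => (hmeas l).mul_const _)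
  have hbP : ∀ (c : Fin m → ℝ) (ω : Ω),
      |∑ l ∈ S, η l ω * c l| ≤ (∑ l ∈ S, |c l|) * (1/p) := by
    intro c ω
    calc |∑ l ∈ S, η l ω * c l| ≤ ∑ l ∈ S, |η l ω * c l| := Finset.abs_sum_le_sum_abs _ _
      _ ≤ ∑ l ∈ S, |c l| * (1/p) := Finset.sum_le_sum (fun l _ => by
          rw [abs_mul, mul_comm]
          exact mul_le_mul_of_nonneg_left (hb l ω) (abs_nonneg _))
      _ = (∑ l ∈ S, |c l|) * (1/p) := by rw [Finset.sum_mul]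
  have hbPnn : ∀ (c : Fin m → ℝ), (0:ℝ) ≤ (∑ l ∈ S, |c l|) * (1/p) := fun c =>
    mul_nonneg (Finset.sum_nonneg fun l _ => abs_nonneg _) hip
  have iP1 : ∀ (c : Fin m → ℝ) (a : Fin m),
      Integrable (fun ω => (∑ l ∈ S, η l ω * c l) * η a ω) μ := fun c a =>
    int_bdd _ ((∑ l ∈ S, |c l|) * (1/p) * (1/p)) ((hmP c).mul (hmeas a)) (fun ω => by
      rw [abs_mul]
      exact mul_le_mul (hbP c ω) (hb a ω) (abs_nonneg _) (hbPnn c))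
  have iP2 : ∀ (c : Fin m → ℝ) (a b : Fin m),
      Integrable (fun ω => (∑ l ∈ S, η l ω * c l) * (η a ω * η b ω)) μ := fun c a b =>
    int_bdd _ ((∑ l ∈ S, |c l|) * (1/p) * ((1/p) * (1/p))) ((hmP c).mul ((hmeas a).mul (hmeas b)))
      (fun ω => by
        rw [abs_mul, abs_mul]
        exact mul_le_mul (hbP c ω)
          (mul_le_mul (hb a ω) (hb b ω) (abs_nonneg _) hip)
          (by positivity) (hbPnn c))
  have iPQ : ∀ (c c' : Fin m → ℝ) (a b : Fin m),
      Integrable (fun ω => ((∑ l ∈ S, η l ω * c l) * (∑ l ∈ S, η l ω * c' l))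
        * (η a ω * η b ω)) μ := fun c c' a b =>
    int_bdd _ (((∑ l ∈ S, |c l|) * (1/p)) * ((∑ l ∈ S, |c' l|) * (1/p)) * ((1/p) * (1/p)))
      (((hmP c).mul (hmP c')).mul ((hmeas a).mul (hmeas b))) (fun ω => by
        rw [abs_mul, abs_mul, abs_mul]
        exact mul_le_mul
          (mul_le_mul (hbP c ω) (hbP c' ω) (abs_nonneg _) (hbPnn c))
          (mul_le_mul (hb a ω) (hb b ω) (abs_nonneg _) hip)
          (by positivity) (mul_nonneg (hbPnn c) (hbPnn c')))
  -- moment values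
  have hE1 : ∀ s, ∫ ω, η s ω ∂μ = 1 := integral_eta hp hmeas hval hdist
  have hE2 : ∀ a b, a ≠ b → ∫ ω, η a ω * η b ω ∂μ = 1 := fun a b hab =>
    E2' hp hmeas hindep hval hdist a b hab
  have hE2s : ∀ a, ∫ ω, η a ω * η a ω ∂μ = 1 / p := by
    intro a
    have h : ∀ ω, η a ω * η a ω = (1/p) * η a ω := fun ω => by
      rcases hval a ω with h | h <;> rw [h] <;> ring
    simp only [h]
    rw [integral_const_mul, hE1 a, mul_one]
  have hE3 := E3' hp hmeas hindep hval hdist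
  have hE4 := E4' hp hmeas hindep hval hdist
  have hT3S : ∀ l ∈ S, ∫ ω, η l ω * (η k ω * η r ω) ∂μ = 1 := fun l hl =>
    hE3 l k r (hSmem l hl).2 (hSmem l hl).1 hkr
  -- sum-integrals
  have hPk : ∀ (c : Fin m → ℝ) (a : Fin m), (∀ l ∈ S, l ≠ a) →
      ∫ ω, (∑ l ∈ S, η l ω * c l) * η a ω ∂μ = ∑ l ∈ S, c l := by
    intro c a hla
    have heq : ∀ ω, (∑ l ∈ S, η l ω * c l) * η a ω
        = ∑ l ∈ S, c l * (η l ω * η a ω) := by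
      intro ω
      rw [Finset.sum_mul]
      exact Finset.sum_congr rfl fun l _ => by ring
    simp only [heq]
    rw [integral_finset_sum _ (fun l _ => (i2 l a).const_mul _)]
    refine Finset.sum_congr rfl fun l hl => ?_
    rw [integral_const_mul, hE2 l a (hla l hl), mul_one]
  have hPkr : ∀ (c : Fin m → ℝ),
      ∫ ω, (∑ l ∈ S, η l ω * c l) * (η k ω * η r ω) ∂μ = ∑ l ∈ S, c l := by
    intro c
    have heq : ∀ ω, (∑ l ∈ S, η l ω * c l) * (η k ω * η r ω)
        = ∑ l ∈ S, c l * (η l ω * (η k ω * η r ω)) := by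
      intro ω
      rw [Finset.sum_mul]
      exact Finset.sum_congr rfl fun l _ => by ring
    simp only [heq]
    rw [integral_finset_sum _ (fun l _ => (i3 l k r).const_mul _)]
    refine Finset.sum_congr rfl fun l hl => ?_
    rw [integral_const_mul, hT3S l hl, mul_one]
  have hT4S : ∀ l ∈ S, ∀ l' ∈ S,
      ∫ ω, (η l ω * η l' ω) * (η k ω * η r ω) ∂μ = if l' = l then 1 / p else 1 := by
    intro l hl l' hl'
    by_cases h : l' = l
    · subst h
      rw [if_pos rfl]
      have heq : ∀ ω, (η l' ω * η l' ω) * (η k ω * η r ω)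
          = (1/p) * (η l' ω * (η k ω * η r ω)) := fun ω => by
        rcases hval l' ω with h | h <;> rw [h] <;> ring
      simp only [heq]
      rw [integral_const_mul, hT3S l' hl', mul_one]
    · rw [if_neg h]
      exact hE4 l l' k r (fun h' => h h'.symm) (hSmem l hl).2 (hSmem l hl).1
        (hSmem l' hl').2 (hSmem l' hl').1 hkr
  have hPQkr : ∫ ω, ((∑ l ∈ S, η l ω * ci l) * (∑ l ∈ S, η l ω * cj l)) * (η k ω * η r ω) ∂μ
      = (∑ l ∈ S, ci l) * (∑ l ∈ S, cj l) + (1/p - 1) * (∑ l ∈ S, ci l * cj l) := by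
    have heq : ∀ ω, ((∑ l ∈ S, η l ω * ci l) * (∑ l ∈ S, η l ω * cj l)) * (η k ω * η r ω)
        = ∑ l ∈ S, ∑ l' ∈ S, (ci l * cj l') * ((η l ω * η l' ω) * (η k ω * η r ω)) := by
      intro ω
      rw [Finset.sum_mul_sum, Finset.sum_mul]
      refine Finset.sum_congr rfl fun l _ => ?_
      rw [Finset.sum_mul]
      exact Finset.sum_congr rfl fun l' _ => by ring
    simp only [heq]
    rw [integral_finset_sum _
      (fun l _ => integrable_finset_sum _ (fun l' _ => (i4 l l' k r).const_mul _))]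
    have hinner : ∀ l ∈ S, ∫ ω, ∑ l' ∈ S, (ci l * cj l') * ((η l ω * η l' ω) * (η k ω * η r ω)) ∂μ
        = ci l * (∑ l' ∈ S, cj l') + ci l * cj l * (1/p - 1) := by
      intro l hl
      rw [integral_finset_sum _ (fun l' _ => (i4 l l' k r).const_mul _)]
      have : ∀ l' ∈ S, ∫ ω, (ci l * cj l') * ((η l ω * η l' ω) * (η k ω * η r ω)) ∂μ
          = ci l * cj l' + (if l' = l then ci l * cj l' * (1/p - 1) else 0) := by
        intro l' hl'
        rw [integral_const_mul, hT4S l hl l' hl']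
        by_cases h : l' = l <;> simp [h] <;> ring
      rw [Finset.sum_congr rfl this, Finset.sum_add_distrib,
        Finset.sum_ite_eq' S l (fun l' => ci l * cj l' * (1/p - 1)), if_pos hl,
        ← Finset.mul_sum]
    rw [Finset.sum_congr rfl hinner, Finset.sum_add_distrib, ← Finset.sum_mul,
      ← Finset.sum_mul]
    ring
  -- the three integrals
  have hIA : ∫ ω, ((∑ l, η l ω * ci l) - yi) * η k ω ∂μ
      = (∑ l ∈ S, ci l) + ci r + ci k * (1/p) - yi := by
    have heq : ∀ ω, ((∑ l, η l ω * ci l) - yi) * η k ω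
        = (∑ l ∈ S, η l ω * ci l) * η k ω
          + (ci r * (η r ω * η k ω) + (ci k * (η k ω * η k ω) + (-yi) * η k ω)) := by
      intro ω
      rw [hsplit ci ω]
      ring
    simp only [heq]
    have j1 : Integrable (fun ω => ci k * (η k ω * η k ω) + (-yi) * η k ω) μ := by
      exact ((i2 k k).const_mul _).add ((i1 k).const_mul _)
    have j2 : Integrable (fun ω => ci r * (η r ω * η k ω)
        + (ci k * (η k ω * η k ω) + (-yi) * η k ω)) μ := by
      exact ((i2 r k).const_mul _).add j1
    rw [integral_add (iP1 ci k) j2,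
      integral_add ((i2 r k).const_mul _) j1,
      integral_add ((i2 k k).const_mul _) ((i1 k).const_mul _),
      integral_const_mul, integral_const_mul, integral_const_mul,
      hPk ci k (fun l hl => (hSmem l hl).2), hE2 r k (Ne.symm hkr), hE2s k, hE1 k]
    ring
  have hIB : ∫ ω, ((∑ l, η l ω * cj l) - yj) * η r ω ∂μ
      = (∑ l ∈ S, cj l) + cj r * (1/p) + cj k - yj := by
    have heq : ∀ ω, ((∑ l, η l ω * cj l) - yj) * η r ω
        = (∑ l ∈ S, η l ω * cj l) * η r ω
          + (cj r * (η r ω * η r ω) + (cj k * (η k ω * η r ω) + (-yj) * η r ω)) := by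
      intro ω
      rw [hsplit cj ω]
      ring
    simp only [heq]
    have j1 : Integrable (fun ω => cj k * (η k ω * η r ω) + (-yj) * η r ω) μ := by
      exact ((i2 k r).const_mul _).add ((i1 r).const_mul _)
    have j2 : Integrable (fun ω => cj r * (η r ω * η r ω)
        + (cj k * (η k ω * η r ω) + (-yj) * η r ω)) μ := by
      exact ((i2 r r).const_mul _).add j1
    rw [integral_add (iP1 cj r) j2,
      integral_add ((i2 r r).const_mul _) j1,
      integral_add ((i2 k r).const_mul _) ((i1 r).const_mul _),
      integral_const_mul, integral_const_mul, integral_const_mul,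
      hPk cj r (fun l hl => (hSmem l hl).1), hE2 k r hkr, hE2s r, hE1 r]
    ring
  have hIAB : ∫ ω, (((∑ l, η l ω * ci l) - yi) * η k ω) * (((∑ l, η l ω * cj l) - yj) * η r ω) ∂μ
      = ((∑ l ∈ S, ci l) * (∑ l ∈ S, cj l) + (1/p - 1) * (∑ l ∈ S, ci l * cj l))
        + ((cj k * (1/p) + cj r * (1/p) - yj) * (∑ l ∈ S, ci l)
        + ((ci k * (1/p) + ci r * (1/p) - yi) * (∑ l ∈ S, cj l)
        + ((ci r * cj r + ci r * cj k + ci k * cj r + ci k * cj k) * ((1/p) * (1/p))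
            - (yj * (ci r + ci k) + yi * (cj r + cj k)) * (1/p) + yi * yj))) := by
    have heq : ∀ ω, (((∑ l, η l ω * ci l) - yi) * η k ω) * (((∑ l, η l ω * cj l) - yj) * η r ω)
        = ((∑ l ∈ S, η l ω * ci l) * (∑ l ∈ S, η l ω * cj l)) * (η k ω * η r ω)
          + ((cj k * (1/p) + cj r * (1/p) - yj) * ((∑ l ∈ S, η l ω * ci l) * (η k ω * η r ω))
          + ((ci k * (1/p) + ci r * (1/p) - yi) * ((∑ l ∈ S, η l ω * cj l) * (η k ω * η r ω))
          + ((ci r * cj r + ci r * cj k + ci k * cj r + ci k * cj k) * ((1/p) * (1/p))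
              - (yj * (ci r + ci k) + yi * (cj r + cj k)) * (1/p) + yi * yj)
            * (η k ω * η r ω))) := by
      intro ω
      rw [hsplit ci ω, hsplit cj ω]
      rcases hval k ω with h | h <;> rcases hval r ω with h' | h' <;> rw [h, h'] <;>
        field_simp <;> ring
    simp only [heq]
    have j1 : Integrable (fun ω =>
        (ci k * (1/p) + ci r * (1/p) - yi) * ((∑ l ∈ S, η l ω * cj l) * (η k ω * η r ω))
        + ((ci r * cj r + ci r * cj k + ci k * cj r + ci k * cj k) * ((1/p) * (1/p))
            - (yj * (ci r + ci k) + yi * (cj r + cj k)) * (1/p) + yi * yj)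
          * (η k ω * η r ω)) μ := by
      exact ((iP2 cj k r).const_mul _).add ((i2 k r).const_mul _)
    have j2 : Integrable (fun ω =>
        (cj k * (1/p) + cj r * (1/p) - yj) * ((∑ l ∈ S, η l ω * ci l) * (η k ω * η r ω))
        + ((ci k * (1/p) + ci r * (1/p) - yi) * ((∑ l ∈ S, η l ω * cj l) * (η k ω * η r ω))
        + ((ci r * cj r + ci r * cj k + ci k * cj r + ci k * cj k) * ((1/p) * (1/p))
            - (yj * (ci r + ci k) + yi * (cj r + cj k)) * (1/p) + yi * yj)
          * (η k ω * η r ω))) μ := by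
      exact ((iP2 ci k r).const_mul _).add j1
    rw [integral_add (iPQ ci cj k r) j2,
      integral_add ((iP2 ci k r).const_mul _) j1,
      integral_add ((iP2 cj k r).const_mul _) ((i2 k r).const_mul _),
      integral_const_mul, integral_const_mul, integral_const_mul,
      hPQkr, hPkr ci, hPkr cj, hE2 k r hkr]
    ring
  rw [hIA, hIB, hIAB]
  field_simp
  ring
end

section
/- Let f_θ(x) = ∑_{r=1}^m a_r σ(w_rᵀx) be a two-layer network, η the coordinatewise dropout mask with keep probability p, and R^drop(θ;η) = (1/2n)∑_{i=1}^n(∑_r η_r a_r σ(w_rᵀx_i) − y_i)². Define the modified loss L_S(θ) = (1/2n)∑_i(f_θ(x_i) − y_i)² + (1−p)/(2np)·∑_i ∑_r a_r² σ(w_rᵀx_i)². Then E_η[∇_θ R^drop(θ;η)] = ∇_θ L_S(θ). -/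
open MeasureTheory ProbabilityTheory Finset
open scoped RealInnerProductSpace

set_option maxHeartbeats 2000000 in
/-- The expectation over the dropout mask of the dropout-loss gradient equals
the gradient of the modified loss
`L_S(θ) = (1/2n)∑_i (f_θ(x_i) − y_i)² + (1−p)/(2np)·∑_i ∑_r a_r² σ(w_rᵀx_i)²`. -/
theorem stmt_6 {Ω : Type*} [MeasurableSpace Ω] (μ : Measure Ω) [IsProbabilityMeasure μ]
    (m n d : ℕ) (p : ℝ) (hp : 0 < p) (hp1 : p ≤ 1)
    (η : Fin m → Ω → ℝ) (hmeas : ∀ k, Measurable (η k))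
    (hindep : iIndepFun η μ)
    (hval : ∀ k ω, η k ω = 1 / p ∨ η k ω = 0)
    (hdist : ∀ k, μ {ω | η k ω = 1 / p} = ENNReal.ofReal p)
    (σ : ℝ → ℝ) (hσ : Differentiable ℝ σ)
    (x : Fin n → EuclideanSpace ℝ (Fin d)) (y : Fin n → ℝ)
    (θ : (Fin m → ℝ) × (Fin m → EuclideanSpace ℝ (Fin d))) :
    let Rdrop : ((Fin m → ℝ) × (Fin m → EuclideanSpace ℝ (Fin d))) → (Fin m → ℝ) → ℝ :=
      fun θ' v => (1 / (2 * (n : ℝ))) * ∑ i, ((∑ r, v r * θ'.1 r * σ ⟪θ'.2 r, x i⟫) - y i) ^ 2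
    let LS : ((Fin m → ℝ) × (Fin m → EuclideanSpace ℝ (Fin d))) → ℝ :=
      fun θ' => (1 / (2 * (n : ℝ))) * ∑ i, ((∑ r, θ'.1 r * σ ⟪θ'.2 r, x i⟫) - y i) ^ 2
        + ((1 - p) / (2 * (n : ℝ) * p)) * ∑ i, ∑ r, (θ'.1 r) ^ 2 * σ ⟪θ'.2 r, x i⟫ ^ 2
    (∫ ω, fderiv ℝ (fun θ' => Rdrop θ' (fun k => η k ω)) θ ∂μ) = fderiv ℝ LS θ := by
  intro Rdrop LS
  have hp0 : p ≠ 0 := ne_of_gt hp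
  have hq0 : (1:ℝ)/p ≠ 0 := one_div_ne_zero hp0
  -- differentiability of the per-neuron features
  have hdiff : ∀ (i : Fin n) (r : Fin m), DifferentiableAt ℝ
      (fun θ' : (Fin m → ℝ) × (Fin m → EuclideanSpace ℝ (Fin d)) =>
        θ'.1 r * σ ⟪θ'.2 r, x i⟫) θ := by
    intro i r
    have h1 : DifferentiableAt ℝ
        (fun θ' : (Fin m → ℝ) × (Fin m → EuclideanSpace ℝ (Fin d)) => θ'.1 r) θ :=
      ((differentiable_apply (𝕜 := ℝ) (F' := fun _ : Fin m => ℝ) r).comp differentiable_fst).differentiableAt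
    have h2 : DifferentiableAt ℝ
        (fun θ' : (Fin m → ℝ) × (Fin m → EuclideanSpace ℝ (Fin d)) => θ'.2 r) θ :=
      ((differentiable_apply (𝕜 := ℝ) (F' := fun _ : Fin m => EuclideanSpace ℝ (Fin d)) r).comp differentiable_snd).differentiableAt
    exact h1.mul ((hσ _).comp θ (h2.inner ℝ (differentiableAt_const (x i))))
  -- derivative of the dropout loss for a fixed mask v
  have key : ∀ v : Fin m → ℝ, HasFDerivAt (fun θ' => Rdrop θ' v)
      (∑ i, ∑ r, ((∑ s, (2 * (1 / (2 * (n : ℝ))) * (θ.1 s * σ ⟪θ.2 s, x i⟫)) * (v s * v r))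
          - (2 * (1 / (2 * (n : ℝ))) * y i) * v r)
        • fderiv ℝ (fun θ' => θ'.1 r * σ ⟪θ'.2 r, x i⟫) θ) θ := by
    intro v
    have h0 : ∀ i : Fin n, HasFDerivAt
        (fun θ' : (Fin m → ℝ) × (Fin m → EuclideanSpace ℝ (Fin d)) =>
          (∑ r, v r * θ'.1 r * σ ⟪θ'.2 r, x i⟫) - y i)
        (∑ r, v r • fderiv ℝ (fun θ' => θ'.1 r * σ ⟪θ'.2 r, x i⟫) θ) θ := by
      intro i
      have := HasFDerivAt.sum (u := Finset.univ) (fun r (_ : r ∈ Finset.univ) =>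
        ((hdiff i r).hasFDerivAt.const_mul (v r)))
      simpa [mul_assoc] using this.sub_const (y i)
    have h1 : ∀ i : Fin n, HasFDerivAt
        (fun θ' : (Fin m → ℝ) × (Fin m → EuclideanSpace ℝ (Fin d)) =>
          ((∑ r, v r * θ'.1 r * σ ⟪θ'.2 r, x i⟫) - y i) ^ 2)
        ((((∑ r, v r * θ.1 r * σ ⟪θ.2 r, x i⟫) - y i)
            • ∑ r, v r • fderiv ℝ (fun θ' => θ'.1 r * σ ⟪θ'.2 r, x i⟫) θ)
          + (((∑ r, v r * θ.1 r * σ ⟪θ.2 r, x i⟫) - y i)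
            • ∑ r, v r • fderiv ℝ (fun θ' => θ'.1 r * σ ⟪θ'.2 r, x i⟫) θ)) θ := by
      intro i
      have := (h0 i).mul (h0 i); simp only [pow_two]; exact this
    have h2 := (HasFDerivAt.fun_sum (u := Finset.univ) fun i (_ : i ∈ Finset.univ) =>
      h1 i).const_mul (1 / (2 * (n : ℝ)))
    refine HasFDerivAt.congr_fderiv h2 ?_
    rw [Finset.smul_sum]
    refine Finset.sum_congr rfl fun i _ => ?_
    rw [← add_smul, smul_smul, Finset.smul_sum]
    refine Finset.sum_congr rfl fun r _ => ?_
    rw [smul_smul]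
    congr 1
    have hs : (∑ s, (2 * (1 / (2 * (n : ℝ))) * (θ.1 s * σ ⟪θ.2 s, x i⟫)) * (v s * v r))
        = (2 * (1 / (2 * (n : ℝ))) * v r) * ∑ s, v s * θ.1 s * σ ⟪θ.2 s, x i⟫ := by
      rw [Finset.mul_sum]; exact Finset.sum_congr rfl fun s _ => by ring
    rw [hs]; ring
  -- indicator representations of the mask moments
  have hAset : ∀ k, MeasurableSet {ω | η k ω = 1 / p} :=
    fun k => hmeas k (measurableSet_singleton (1 / p))
  have hrep : ∀ s r, (fun ω => η s ω * η r ω)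
      = ({ω | η s ω = 1 / p} ∩ {ω | η r ω = 1 / p}).indicator
          (fun _ => (1 / p) * (1 / p)) := by
    intro s r
    funext ω
    rcases hval s ω with h1 | h1 <;> rcases hval r ω with h2 | h2 <;>
      simp [Set.indicator_apply, Set.mem_setOf_eq, h1, h2, hq0, Ne.symm hq0, hp.ne, hp.ne']
  have hrep1 : ∀ r, η r = ({ω | η r ω = 1 / p}).indicator (fun _ => (1 / p)) := by
    intro r
    funext ω
    rcases hval r ω with h1 | h1 <;>
      simp [Set.indicator_apply, Set.mem_setOf_eq, h1, hq0, Ne.symm hq0, hp.ne, hp.ne']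
  have hint : ∀ s r, Integrable (fun ω => η s ω * η r ω) μ := by
    intro s r
    rw [hrep s r]
    exact (integrable_const _).indicator ((hAset s).inter (hAset r))
  have hint1 : ∀ r, Integrable (η r) μ := by
    intro r
    rw [hrep1 r]
    exact (integrable_const _).indicator (hAset r)
  have hM : ∀ s r, (∫ ω, η s ω * η r ω ∂μ) = if s = r then 1 / p else 1 := by
    intro s r
    rw [hrep s r, integral_indicator_const _ ((hAset s).inter (hAset r))]
    by_cases h : s = r
    · subst h
      rw [Set.inter_self, measureReal_def, hdist s, if_pos rfl, ENNReal.toReal_ofReal hp.le, smul_eq_mul]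
      field_simp
    · have hind := (hindep.indepFun h).measure_inter_preimage_eq_mul
        (s := {(1 : ℝ) / p}) (t := {(1 : ℝ) / p})
        (measurableSet_singleton _) (measurableSet_singleton _)
      have hset : ({ω | η s ω = 1 / p} ∩ {ω | η r ω = 1 / p})
          = (η s ⁻¹' {(1:ℝ)/p} ∩ η r ⁻¹' {(1:ℝ)/p}) := rfl
      have hset2 : (η s ⁻¹' {(1:ℝ)/p}) = {ω | η s ω = 1 / p} := rfl
      have hset3 : (η r ⁻¹' {(1:ℝ)/p}) = {ω | η r ω = 1 / p} := rfl
      rw [hset, measureReal_def, hind, hset2, hset3, hdist s, hdist r, if_neg h,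
        ENNReal.toReal_mul, ENNReal.toReal_ofReal hp.le, smul_eq_mul]
      field_simp
  have hM1 : ∀ r, (∫ ω, η r ω ∂μ) = 1 := by
    intro r
    rw [hrep1 r, integral_indicator_const _ (hAset r), measureReal_def, hdist r,
      ENNReal.toReal_ofReal hp.le, smul_eq_mul]
    field_simp
  -- rewrite the integrand using `key`
  have hfd : ∀ ω, fderiv ℝ (fun θ' => Rdrop θ' (fun k => η k ω)) θ
      = ∑ i, ∑ r, ((∑ s, (2 * (1 / (2 * (n : ℝ))) * (θ.1 s * σ ⟪θ.2 s, x i⟫)) * (η s ω * η r ω))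
          - (2 * (1 / (2 * (n : ℝ))) * y i) * η r ω)
        • fderiv ℝ (fun θ' => θ'.1 r * σ ⟪θ'.2 r, x i⟫) θ :=
    fun ω => (key (fun k => η k ω)).fderiv
  have hcoefint : ∀ (i : Fin n) (r : Fin m), Integrable
      (fun ω => (∑ s, (2 * (1 / (2 * (n : ℝ))) * (θ.1 s * σ ⟪θ.2 s, x i⟫)) * (η s ω * η r ω))
          - (2 * (1 / (2 * (n : ℝ))) * y i) * η r ω) μ :=
    fun i r => (integrable_finset_sum _ fun s _ => (hint s r).const_mul _).sub
      ((hint1 r).const_mul _)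
  -- derivative of the modified loss
  have keyLS : HasFDerivAt LS
      (∑ i, ∑ r, ((2 * (1 / (2 * (n : ℝ))) * ((∑ s, θ.1 s * σ ⟪θ.2 s, x i⟫) - y i))
          + ((1 - p) / (2 * (n:ℝ) * p)) * (2 * (θ.1 r * σ ⟪θ.2 r, x i⟫)))
        • fderiv ℝ (fun θ' => θ'.1 r * σ ⟪θ'.2 r, x i⟫) θ) θ := by
    have h0 : ∀ i : Fin n, HasFDerivAt
        (fun θ' : (Fin m → ℝ) × (Fin m → EuclideanSpace ℝ (Fin d)) =>
          (∑ r, θ'.1 r * σ ⟪θ'.2 r, x i⟫) - y i)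
        (∑ r, fderiv ℝ (fun θ' => θ'.1 r * σ ⟪θ'.2 r, x i⟫) θ) θ :=
      fun i => (HasFDerivAt.fun_sum (u := Finset.univ) fun r (_ : r ∈ Finset.univ) =>
        (hdiff i r).hasFDerivAt).sub_const (y i)
    have h1 : ∀ i : Fin n, HasFDerivAt
        (fun θ' : (Fin m → ℝ) × (Fin m → EuclideanSpace ℝ (Fin d)) =>
          ((∑ r, θ'.1 r * σ ⟪θ'.2 r, x i⟫) - y i) ^ 2)
        ((((∑ r, θ.1 r * σ ⟪θ.2 r, x i⟫) - y i)
            • ∑ r, fderiv ℝ (fun θ' => θ'.1 r * σ ⟪θ'.2 r, x i⟫) θ)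
          + (((∑ r, θ.1 r * σ ⟪θ.2 r, x i⟫) - y i)
            • ∑ r, fderiv ℝ (fun θ' => θ'.1 r * σ ⟪θ'.2 r, x i⟫) θ)) θ :=
      fun i => by have := (h0 i).mul (h0 i); simp only [pow_two]; exact this
    have h2 : ∀ (i : Fin n) (r : Fin m), HasFDerivAt
        (fun θ' : (Fin m → ℝ) × (Fin m → EuclideanSpace ℝ (Fin d)) =>
          (θ'.1 r) ^ 2 * σ ⟪θ'.2 r, x i⟫ ^ 2)
        (((θ.1 r * σ ⟪θ.2 r, x i⟫) • fderiv ℝ (fun θ' => θ'.1 r * σ ⟪θ'.2 r, x i⟫) θ)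
          + ((θ.1 r * σ ⟪θ.2 r, x i⟫) • fderiv ℝ (fun θ' => θ'.1 r * σ ⟪θ'.2 r, x i⟫) θ)) θ := by
      intro i r
      have hfun : (fun θ' : (Fin m → ℝ) × (Fin m → EuclideanSpace ℝ (Fin d)) =>
            (θ'.1 r) ^ 2 * σ ⟪θ'.2 r, x i⟫ ^ 2)
          = (fun θ' => (θ'.1 r * σ ⟪θ'.2 r, x i⟫) * (θ'.1 r * σ ⟪θ'.2 r, x i⟫)) := by
        funext z; ring
      rw [hfun]
      exact (hdiff i r).hasFDerivAt.mul (hdiff i r).hasFDerivAt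
    have hP1 := (HasFDerivAt.fun_sum (u := Finset.univ) fun i (_ : i ∈ Finset.univ) =>
      h1 i).const_mul (1 / (2 * (n : ℝ)))
    have hP2 := (HasFDerivAt.fun_sum (u := Finset.univ) fun i (_ : i ∈ Finset.univ) =>
      HasFDerivAt.fun_sum (u := Finset.univ) fun r (_ : r ∈ Finset.univ) => h2 i r).const_mul
      ((1 - p) / (2 * (n:ℝ) * p))
    refine HasFDerivAt.congr_fderiv (hP1.add hP2) ?_
    rw [Finset.smul_sum, Finset.smul_sum, ← Finset.sum_add_distrib]
    refine Finset.sum_congr rfl fun i _ => ?_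
    rw [← add_smul, smul_smul, Finset.smul_sum, Finset.smul_sum, ← Finset.sum_add_distrib]
    refine Finset.sum_congr rfl fun r _ => ?_
    rw [← add_smul, smul_smul, ← add_smul]
    congr 1
    ring
  rw [keyLS.fderiv]
  -- integrate
  simp only [hfd]
  rw [integral_finset_sum _ (fun i _ =>
    integrable_finset_sum _ (fun r _ => (hcoefint i r).smul_const _))]
  refine Finset.sum_congr rfl fun i _ => ?_
  rw [integral_finset_sum _ (fun r _ => (hcoefint i r).smul_const _)]
  refine Finset.sum_congr rfl fun r _ => ?_
  rw [integral_smul_const]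
  congr 1
  rw [integral_sub (integrable_finset_sum _ fun s _ => (hint s r).const_mul _)
    ((hint1 r).const_mul _),
    integral_finset_sum _ (fun s _ => (hint s r).const_mul _)]
  simp only [integral_const_mul, hM, hM1, mul_one]
  have hsplit : ∀ s : Fin m, (2 * (1 / (2 * (n : ℝ))) * (θ.1 s * σ ⟪θ.2 s, x i⟫))
        * (if s = r then 1 / p else 1)
      = 2 * (1 / (2 * (n : ℝ))) * (θ.1 s * σ ⟪θ.2 s, x i⟫)
        + (if s = r then (2 * (1 / (2 * (n : ℝ))) * (θ.1 s * σ ⟪θ.2 s, x i⟫)) * (1 / p - 1)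
          else 0) := by
    intro s; split <;> ring
  simp only [hsplit, Finset.sum_add_distrib, Finset.sum_ite_eq' Finset.univ r,
    Finset.mem_univ, if_true]
  have hms : (∑ s, 2 * (1 / (2 * (n : ℝ))) * (θ.1 s * σ ⟪θ.2 s, x i⟫))
      = 2 * (1 / (2 * (n : ℝ))) * ∑ s, θ.1 s * σ ⟪θ.2 s, x i⟫ := (Finset.mul_sum _ _ _).symm
  rw [hms]
  have hKp : (1 / (2 * (n : ℝ))) * (1 / p - 1) = (1 - p) / (2 * (n:ℝ) * p) := by
    field_simp
  rw [← hKp]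
  ring
end

section
/- Under the same hypotheses (σ smooth and 1-Lipschitz with σ(0)=0, bounded σ', σ'', and bounded data), there exists a constant C > 0 such that ‖∇²_θ L_S(θ) · ∇_θ L_S(θ)‖₂ ≤ C(1 + ‖θ‖₂⁶) for all θ, where L_S is the modified dropout loss of a two-layer network. -/
open Finset
open scoped RealInnerProductSpace

set_option synthInstance.maxHeartbeats 1000000
set_option maxHeartbeats 2000000



section Der2
variable {H : Type*} [NormedAddCommGroup H] [NormedSpace ℝ H]

/-- Explicit first and second derivative data for a real-valued function. -/
def Der2 (f : H → ℝ) (f' : H → H →L[ℝ] ℝ) (f'' : H → H →L[ℝ] H →L[ℝ] ℝ) : Prop :=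
  (∀ x, HasFDerivAt f (f' x) x) ∧ ∀ x, HasFDerivAt f' (f'' x) x

lemma Der2.clm (L : H →L[ℝ] ℝ) : Der2 (fun x => L x) (fun _ => L) (fun _ => 0) :=
  ⟨fun x => L.hasFDerivAt, fun x => hasFDerivAt_const L x⟩

lemma Der2.sub_const {f f' f''} (h : Der2 f f' f'') (c : ℝ) :
    Der2 (fun x : H => f x - c) f' f'' :=
  ⟨fun x => (h.1 x).sub_const c, h.2⟩

lemma Der2.add {f f' f'' g g' g''} (hf : Der2 f f' f'') (hg : Der2 g g' g'') :
    Der2 (fun x : H => f x + g x) (fun x => f' x + g' x) (fun x => f'' x + g'' x) :=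
  ⟨fun x => (hf.1 x).add (hg.1 x), fun x => (hf.2 x).add (hg.2 x)⟩

lemma Der2.sum {ι : Type*} {s : Finset ι} {f : ι → H → ℝ} {f' : ι → H → H →L[ℝ] ℝ}
    {f'' : ι → H → H →L[ℝ] H →L[ℝ] ℝ} (h : ∀ i ∈ s, Der2 (f i) (f' i) (f'' i)) :
    Der2 (fun x => ∑ i ∈ s, f i x) (fun x => ∑ i ∈ s, f' i x) (fun x => ∑ i ∈ s, f'' i x) :=
  ⟨fun x => HasFDerivAt.fun_sum (fun i hi => (h i hi).1 x),
   fun x => HasFDerivAt.fun_sum (fun i hi => (h i hi).2 x)⟩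

lemma Der2.const_mul {f f' f''} (h : Der2 f f' f'') (c : ℝ) :
    Der2 (fun x : H => c * f x) (fun x => c • f' x) (fun x => c • f'' x) :=
  ⟨fun x => (h.1 x).const_mul c, fun x => (h.2 x).const_smul c⟩

lemma Der2.mul {f f' f'' g g' g''} (hf : Der2 f f' f'') (hg : Der2 g g' g'') :
    Der2 (fun x : H => f x * g x)
      (fun x => f x • g' x + g x • f' x)
      (fun x => (f x • g'' x + (f' x).smulRight (g' x)) +
        (g x • f'' x + (g' x).smulRight (f' x))) :=
  ⟨fun x => (hf.1 x).mul (hg.1 x),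
   fun x => ((hf.1 x).smul (hg.2 x)).add ((hg.1 x).smul (hf.2 x))⟩

lemma Der2.sigma_comp {σ : ℝ → ℝ} (hσ : ContDiff ℝ 2 σ) (L : H →L[ℝ] ℝ) :
    Der2 (fun x => σ (L x)) (fun x => deriv σ (L x) • L)
      (fun x => (deriv (deriv σ) (L x) • L).smulRight L) := by
  have h2' : ContDiff ℝ (1 + 1) σ := by norm_num; exact hσ
  have hd : Differentiable ℝ σ ∧ ContDiff ℝ 1 (deriv σ) := by
    have := contDiff_succ_iff_deriv.mp h2'
    exact ⟨this.1, this.2.2⟩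
  have h1 : ∀ t, HasDerivAt σ (deriv σ t) t := fun t => (hd.1 t).hasDerivAt
  have h2 : ∀ t, HasDerivAt (deriv σ) (deriv (deriv σ) t) t := fun t =>
    ((hd.2.differentiable one_ne_zero) t).hasDerivAt
  constructor
  · intro x; exact (h1 (L x)).comp_hasFDerivAt x L.hasFDerivAt
  · intro x
    have hc : HasFDerivAt (fun y => deriv σ (L y)) (deriv (deriv σ) (L x) • L) x :=
      (h2 (L x)).comp_hasFDerivAt x L.hasFDerivAt
    have := hc.fun_smul (hasFDerivAt_const L x)
    simpa using this

lemma Der2.comp_clm {G : Type*} [NormedAddCommGroup G] [NormedSpace ℝ G]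
    {F : Type*} [NormedAddCommGroup F] [NormedSpace ℝ F]
    {h h' h''} (hh : Der2 h h' h'') (π : G →L[ℝ] F) :
    Der2 (fun x => h (π x)) (fun x => (h' (π x)).comp π)
      (fun x => (((ContinuousLinearMap.compL ℝ G F ℝ).flip π).comp
        ((h'' (π x)).comp π))) := by
  constructor
  · intro x; exact (hh.1 (π x)).comp x π.hasFDerivAt
  · intro x
    have key : HasFDerivAt (fun y => ((ContinuousLinearMap.compL ℝ G F ℝ).flip π) (h' (π y)))
        ((((ContinuousLinearMap.compL ℝ G F ℝ).flip π)).comp ((h'' (π x)).comp π)) x :=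
      ((ContinuousLinearMap.compL ℝ G F ℝ).flip π).hasFDerivAt.comp x
        ((hh.2 (π x)).comp x π.hasFDerivAt)
    have : (fun y => (h' (π y)).comp π) =
        fun y => ((ContinuousLinearMap.compL ℝ G F ℝ).flip π) (h' (π y)) := by
      funext y; simp
    rw [this]; exact key

end Der2

section Blocks
variable {ι : Type*} [Fintype ι] {F : Type*} [NormedAddCommGroup F] [NormedSpace ℝ F]

local notation "E" => PiLp 2 (fun _ : ι => F)

lemma cs_sum (a b : ι → ℝ) (ha : ∀ r, 0 ≤ a r) (hb : ∀ r, 0 ≤ b r) :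
    ∑ r, a r * b r ≤ Real.sqrt (∑ r, (a r)^2) * Real.sqrt (∑ r, (b r)^2) := by
  have h := Finset.sum_mul_sq_le_sq_mul_sq Finset.univ a b
  have hnn : 0 ≤ ∑ r, a r * b r := Finset.sum_nonneg fun r _ => mul_nonneg (ha r) (hb r)
  calc ∑ r, a r * b r = Real.sqrt ((∑ r, a r * b r)^2) := (Real.sqrt_sq hnn).symm
    _ ≤ Real.sqrt ((∑ r, (a r)^2) * ∑ r, (b r)^2) := Real.sqrt_le_sqrt h
    _ = _ := Real.sqrt_mul (Finset.sum_nonneg fun r _ => sq_nonneg _) _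

lemma pilp_norm_coord (v : E) (r : ι) : ‖v r‖ ≤ ‖v‖ := by
  have h := PiLp.norm_sq_eq_of_L2 (fun _ : ι => F) v
  have h1 : ‖v r‖^2 ≤ ‖v‖^2 := by
    rw [h]
    exact Finset.single_le_sum (f := fun r => ‖v r‖^2) (fun r _ => sq_nonneg _) (mem_univ r)
  nlinarith [norm_nonneg (v r), norm_nonneg v]

lemma block1_norm (c : ι → ℝ) (B : ι → F →L[ℝ] ℝ) (hB : ∀ r, ‖B r‖ ≤ c r) :
    ‖∑ r, (B r).comp (PiLp.proj 2 (fun _ : ι => F) r)‖ ≤ Real.sqrt (∑ r, (c r)^2) := by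
  apply ContinuousLinearMap.opNorm_le_bound _ (Real.sqrt_nonneg _)
  intro v
  have hc : ∀ r, 0 ≤ c r := fun r => le_trans (norm_nonneg _) (hB r)
  calc ‖(∑ r, (B r).comp (PiLp.proj 2 (fun _ : ι => F) r)) v‖
      = ‖∑ r, B r (v r)‖ := by simp
    _ ≤ ∑ r, ‖B r (v r)‖ := norm_sum_le _ _
    _ ≤ ∑ r, c r * ‖v r‖ := Finset.sum_le_sum fun r _ =>
        le_trans ((B r).le_opNorm _) (mul_le_mul_of_nonneg_right (hB r) (norm_nonneg _))
    _ ≤ Real.sqrt (∑ r, (c r)^2) * Real.sqrt (∑ r, ‖v r‖^2) :=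
        cs_sum c (fun r => ‖v r‖) hc (fun r => norm_nonneg _)
    _ = Real.sqrt (∑ r, (c r)^2) * ‖v‖ := by
        congr 1
        rw [← PiLp.norm_sq_eq_of_L2 (fun _ : ι => F) v]
        exact Real.sqrt_sq (norm_nonneg v)

lemma block2_norm (K : ℝ) (hK : 0 ≤ K) (B : ι → F →L[ℝ] F →L[ℝ] ℝ) (hB : ∀ r, ‖B r‖ ≤ K) :
    ‖∑ r, ((ContinuousLinearMap.compL ℝ E F ℝ).flip (PiLp.proj 2 (fun _ : ι => F) r)).comp
      ((B r).comp (PiLp.proj 2 (fun _ : ι => F) r))‖ ≤ K := by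
  apply ContinuousLinearMap.opNorm_le_bound _ hK
  intro u
  apply ContinuousLinearMap.opNorm_le_bound _ (mul_nonneg hK (norm_nonneg _))
  intro v
  have : ((∑ r, ((ContinuousLinearMap.compL ℝ E F ℝ).flip
      (PiLp.proj 2 (fun _ : ι => F) r)).comp
      ((B r).comp (PiLp.proj 2 (fun _ : ι => F) r))) u) v = ∑ r, B r (u r) (v r) := by
    simp
  rw [this]
  calc ‖∑ r, B r (u r) (v r)‖ ≤ ∑ r, ‖B r (u r) (v r)‖ := norm_sum_le _ _
    _ ≤ ∑ r, K * (‖u r‖ * ‖v r‖) := by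
        apply Finset.sum_le_sum
        intro r _
        have h1 : ‖B r (u r) (v r)‖ ≤ ‖B r‖ * ‖u r‖ * ‖v r‖ := (B r).le_opNorm₂ _ _
        have h2 : ‖B r‖ * ‖u r‖ * ‖v r‖ ≤ K * ‖u r‖ * ‖v r‖ := by
          have := mul_le_mul_of_nonneg_right (mul_le_mul_of_nonneg_right (hB r)
            (norm_nonneg (u r))) (norm_nonneg (v r))
          linarith
        linarith [h1, h2, mul_assoc K ‖u r‖ ‖v r‖]
    _ = K * ∑ r, ‖u r‖ * ‖v r‖ := by rw [Finset.mul_sum]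
    _ ≤ K * (‖u‖ * ‖v‖) := by
        apply mul_le_mul_of_nonneg_left _ hK
        calc ∑ r, ‖u r‖ * ‖v r‖
            ≤ Real.sqrt (∑ r, ‖u r‖^2) * Real.sqrt (∑ r, ‖v r‖^2) :=
              cs_sum _ _ (fun _ => norm_nonneg _) (fun _ => norm_nonneg _)
          _ = ‖u‖ * ‖v‖ := by
              rw [← PiLp.norm_sq_eq_of_L2 (fun _ : ι => F) u,
                ← PiLp.norm_sq_eq_of_L2 (fun _ : ι => F) v,
                Real.sqrt_sq (norm_nonneg u), Real.sqrt_sq (norm_nonneg v)]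
    _ = K * ‖u‖ * ‖v‖ := by ring

lemma sum_cube_le (s : ι → ℝ) (h : ∀ r, 0 ≤ s r) : ∑ r, (s r)^3 ≤ (∑ r, s r)^3 := by
  have hS : ∀ r, s r ≤ ∑ r, s r := fun r =>
    Finset.single_le_sum (fun r _ => h r) (mem_univ r)
  have hSnn : 0 ≤ ∑ r, s r := Finset.sum_nonneg fun r _ => h r
  calc ∑ r, (s r)^3 ≤ ∑ r, s r * (∑ r', s r')^2 := by
        apply Finset.sum_le_sum; intro r _
        have : (s r)^2 ≤ (∑ r', s r')^2 := by nlinarith [h r, hS r]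
        nlinarith [h r]
    _ = (∑ r, s r) * (∑ r', s r')^2 := by rw [← Finset.sum_mul]
    _ = (∑ r, s r)^3 := by ring

end Blocks

section PerCoord
variable {H : Type*} [NormedAddCommGroup H] [NormedSpace ℝ H]
variable {σ : ℝ → ℝ} {M : ℝ}


lemma sigma_val_le (hlip : LipschitzWith 1 σ) (h0 : σ 0 = 0) (t : ℝ) : |σ t| ≤ |t| := by
  have := hlip.dist_le_mul t 0
  simpa [h0, Real.dist_eq] using this

lemma sigma_deriv_le (hlip : LipschitzWith 1 σ) (t : ℝ) : |deriv σ t| ≤ 1 := by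
  have h := norm_deriv_le_of_lipschitz (𝕜 := ℝ) hlip (x₀ := t)
  simpa using h
end PerCoord

section PerCoord2
variable {H : Type*} [NormedAddCommGroup H] [NormedSpace ℝ H]
variable {σ : ℝ → ℝ} {M : ℝ}

lemma der_psi (hσ : ContDiff ℝ 2 σ) (hlip : LipschitzWith 1 σ) (h0 : σ 0 = 0)
    (hM : ∀ t, |deriv (deriv σ) t| ≤ M) (L : H →L[ℝ] ℝ) (hL : ‖L‖ ≤ 1) :
    ∃ g' g'', Der2 (fun ξ : H => σ (L ξ)) g' g'' ∧
      (∀ ξ, |σ (L ξ)| ≤ ‖ξ‖) ∧ (∀ ξ, ‖g' ξ‖ ≤ 1) ∧ (∀ ξ, ‖g'' ξ‖ ≤ M) := by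
  refine ⟨_, _, Der2.sigma_comp hσ L, ?_, ?_, ?_⟩
  · intro ξ
    calc |σ (L ξ)| ≤ |L ξ| := sigma_val_le hlip h0 _
      _ ≤ ‖L‖ * ‖ξ‖ := L.le_opNorm ξ
      _ ≤ 1 * ‖ξ‖ := by gcongr
      _ = ‖ξ‖ := one_mul _
  · intro ξ
    calc ‖deriv σ (L ξ) • L‖ = |deriv σ (L ξ)| * ‖L‖ := by
          rw [norm_smul (deriv σ (L ξ)) L, Real.norm_eq_abs]
      _ ≤ 1 * 1 := by
          apply mul_le_mul (sigma_deriv_le hlip _) hL (norm_nonneg _) zero_le_one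
      _ = 1 := one_mul 1
  · intro ξ
    calc ‖(deriv (deriv σ) (L ξ) • L).smulRight L‖
        = ‖deriv (deriv σ) (L ξ) • L‖ * ‖L‖ := ContinuousLinearMap.norm_smulRight_apply _ _
      _ = |deriv (deriv σ) (L ξ)| * ‖L‖ * ‖L‖ := by
          rw [norm_smul (deriv (deriv σ) (L ξ)) L, Real.norm_eq_abs]
      _ ≤ M * 1 * 1 := by
          have h0M : (0:ℝ) ≤ M := le_trans (abs_nonneg _) (hM 0)
          have := hM (L ξ)
          gcongr
      _ = M := by ring

lemma der_hE (hσ : ContDiff ℝ 2 σ) (hlip : LipschitzWith 1 σ) (h0 : σ 0 = 0)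
    (hM : ∀ t, |deriv (deriv σ) t| ≤ M) (A L : H →L[ℝ] ℝ) (hA : ‖A‖ ≤ 1) (hL : ‖L‖ ≤ 1) :
    ∃ h' h'', Der2 (fun ξ : H => A ξ * σ (L ξ)) h' h'' ∧
      (∀ ξ, |A ξ * σ (L ξ)| ≤ ‖ξ‖^2) ∧ (∀ ξ, ‖h' ξ‖ ≤ 2 * ‖ξ‖) ∧
      (∀ ξ, ‖h'' ξ‖ ≤ M * ‖ξ‖ + 2) := by
  obtain ⟨g', g'', hg, hb0, hb1, hb2⟩ := der_psi hσ hlip h0 hM L hL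
  have hAxi : ∀ ξ : H, |A ξ| ≤ ‖ξ‖ := fun ξ => by
    calc |A ξ| ≤ ‖A‖ * ‖ξ‖ := A.le_opNorm ξ
      _ ≤ 1 * ‖ξ‖ := by gcongr
      _ = ‖ξ‖ := one_mul _
  refine ⟨_, _, Der2.mul (Der2.clm A) hg, ?_, ?_, ?_⟩
  · intro ξ
    rw [abs_mul, pow_two]
    exact mul_le_mul (hAxi ξ) (hb0 ξ) (abs_nonneg _) (norm_nonneg _)
  · intro ξ
    calc ‖A ξ • g' ξ + σ (L ξ) • A‖ ≤ ‖A ξ • g' ξ‖ + ‖σ (L ξ) • A‖ := norm_add_le _ _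
      _ = |A ξ| * ‖g' ξ‖ + |σ (L ξ)| * ‖A‖ := by
          rw [norm_smul (A ξ) (g' ξ), norm_smul (σ (L ξ)) A, Real.norm_eq_abs,
            Real.norm_eq_abs]
      _ ≤ ‖ξ‖ * 1 + ‖ξ‖ * 1 := by
          apply add_le_add
          · exact mul_le_mul (hAxi ξ) (hb1 ξ) (norm_nonneg _) (norm_nonneg _)
          · exact mul_le_mul (hb0 ξ) hA (norm_nonneg _) (norm_nonneg _)
      _ = 2 * ‖ξ‖ := by ring
  · intro ξ
    have h0M : (0:ℝ) ≤ M := le_trans (abs_nonneg _) (hM 0)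
    have hAxi' : |A ξ| ≤ ‖ξ‖ := hAxi ξ
    have n1 : ‖A ξ • g'' ξ‖ ≤ ‖ξ‖ * M := by
      refine le_trans (ContinuousLinearMap.opNorm_smul_le (A ξ) (g'' ξ)) ?_
      rw [Real.norm_eq_abs]
      exact mul_le_mul hAxi' (hb2 ξ) (norm_nonneg _) (norm_nonneg _)
    have n2 : ‖A.smulRight (g' ξ)‖ ≤ 1 := by
      rw [ContinuousLinearMap.norm_smulRight_apply]
      exact mul_le_one₀ hA (norm_nonneg _) (hb1 ξ)
    have n3 : ‖σ (L ξ) • (0 : H →L[ℝ] H →L[ℝ] ℝ)‖ ≤ 0 := by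
      refine le_trans (ContinuousLinearMap.opNorm_smul_le (σ (L ξ)) (0 : H →L[ℝ] H →L[ℝ] ℝ)) ?_
      rw [norm_zero, mul_zero]
    have n4 : ‖(g' ξ).smulRight A‖ ≤ 1 := by
      rw [ContinuousLinearMap.norm_smulRight_apply]
      exact mul_le_one₀ (hb1 ξ) (norm_nonneg _) hA
    have t1 : ‖A ξ • g'' ξ + A.smulRight (g' ξ)‖ ≤ ‖ξ‖ * M + 1 :=
      le_trans (norm_add_le (A ξ • g'' ξ) (A.smulRight (g' ξ))) (add_le_add n1 n2)
    have t2 : ‖σ (L ξ) • (0 : H →L[ℝ] H →L[ℝ] ℝ) + (g' ξ).smulRight A‖ ≤ 1 := by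
      have := le_trans (norm_add_le (σ (L ξ) • (0 : H →L[ℝ] H →L[ℝ] ℝ)) ((g' ξ).smulRight A))
        (add_le_add n3 n4)
      linarith
    have := le_trans (norm_add_le (A ξ • g'' ξ + A.smulRight (g' ξ))
      (σ (L ξ) • (0 : H →L[ℝ] H →L[ℝ] ℝ) + (g' ξ).smulRight A)) (add_le_add t1 t2)
    calc ‖A ξ • g'' ξ + A.smulRight (g' ξ) +
        (σ (L ξ) • (0 : H →L[ℝ] H →L[ℝ] ℝ) + (g' ξ).smulRight A)‖
        ≤ ‖ξ‖ * M + 1 + 1 := this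
      _ = M * ‖ξ‖ + 2 := by ring

end PerCoord2

section MulPack
variable {H : Type*} [NormedAddCommGroup H] [NormedSpace ℝ H]

/-- packaged bounds for products -/
lemma der_mul_pack {f g : H → ℝ} {v1 b1 c1 v2 b2 c2 : H → ℝ}
    (h1 : ∃ f' f'', Der2 f f' f'' ∧ (∀ ξ, |f ξ| ≤ v1 ξ) ∧ (∀ ξ, ‖f' ξ‖ ≤ b1 ξ) ∧
      (∀ ξ, ‖f'' ξ‖ ≤ c1 ξ))
    (h2 : ∃ g' g'', Der2 g g' g'' ∧ (∀ ξ, |g ξ| ≤ v2 ξ) ∧ (∀ ξ, ‖g' ξ‖ ≤ b2 ξ) ∧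
      (∀ ξ, ‖g'' ξ‖ ≤ c2 ξ)) :
    ∃ h' h'', Der2 (fun ξ => f ξ * g ξ) h' h'' ∧ (∀ ξ, |f ξ * g ξ| ≤ v1 ξ * v2 ξ) ∧
      (∀ ξ, ‖h' ξ‖ ≤ v1 ξ * b2 ξ + v2 ξ * b1 ξ) ∧
      (∀ ξ, ‖h'' ξ‖ ≤ (v1 ξ * c2 ξ + b1 ξ * b2 ξ) + (v2 ξ * c1 ξ + b2 ξ * b1 ξ)) := by
  obtain ⟨f', f'', hf, hv1, hb1, hc1⟩ := h1
  obtain ⟨g', g'', hg, hv2, hb2, hc2⟩ := h2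
  refine ⟨_, _, Der2.mul hf hg, ?_, ?_, ?_⟩
  · intro ξ
    rw [abs_mul]
    exact mul_le_mul (hv1 ξ) (hv2 ξ) (abs_nonneg _) (le_trans (abs_nonneg _) (hv1 ξ))
  · intro ξ
    have n1 : ‖f ξ • g' ξ‖ ≤ v1 ξ * b2 ξ := by
      refine le_trans (ContinuousLinearMap.opNorm_smul_le (f ξ) (g' ξ)) ?_
      rw [Real.norm_eq_abs]
      exact mul_le_mul (hv1 ξ) (hb2 ξ) (norm_nonneg _) (le_trans (abs_nonneg _) (hv1 ξ))
    have n2 : ‖g ξ • f' ξ‖ ≤ v2 ξ * b1 ξ := by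
      refine le_trans (ContinuousLinearMap.opNorm_smul_le (g ξ) (f' ξ)) ?_
      rw [Real.norm_eq_abs]
      exact mul_le_mul (hv2 ξ) (hb1 ξ) (norm_nonneg _) (le_trans (abs_nonneg _) (hv2 ξ))
    exact le_trans (norm_add_le (f ξ • g' ξ) (g ξ • f' ξ)) (add_le_add n1 n2)
  · intro ξ
    have n1 : ‖f ξ • g'' ξ‖ ≤ v1 ξ * c2 ξ := by
      refine le_trans (ContinuousLinearMap.opNorm_smul_le (f ξ) (g'' ξ)) ?_
      rw [Real.norm_eq_abs]
      exact mul_le_mul (hv1 ξ) (hc2 ξ) (norm_nonneg _) (le_trans (abs_nonneg _) (hv1 ξ))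
    have n2 : ‖(f' ξ).smulRight (g' ξ)‖ ≤ b1 ξ * b2 ξ := by
      rw [ContinuousLinearMap.norm_smulRight_apply]
      exact mul_le_mul (hb1 ξ) (hb2 ξ) (norm_nonneg _) (le_trans (norm_nonneg _) (hb1 ξ))
    have n3 : ‖g ξ • f'' ξ‖ ≤ v2 ξ * c1 ξ := by
      refine le_trans (ContinuousLinearMap.opNorm_smul_le (g ξ) (f'' ξ)) ?_
      rw [Real.norm_eq_abs]
      exact mul_le_mul (hv2 ξ) (hc1 ξ) (norm_nonneg _) (le_trans (abs_nonneg _) (hv2 ξ))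
    have n4 : ‖(g' ξ).smulRight (f' ξ)‖ ≤ b2 ξ * b1 ξ := by
      rw [ContinuousLinearMap.norm_smulRight_apply]
      exact mul_le_mul (hb2 ξ) (hb1 ξ) (norm_nonneg _) (le_trans (norm_nonneg _) (hb2 ξ))
    have t1 := le_trans (norm_add_le (f ξ • g'' ξ) ((f' ξ).smulRight (g' ξ))) (add_le_add n1 n2)
    have t2 := le_trans (norm_add_le (g ξ • f'' ξ) ((g' ξ).smulRight (f' ξ))) (add_le_add n3 n4)
    exact le_trans (norm_add_le (f ξ • g'' ξ + (f' ξ).smulRight (g' ξ))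
      (g ξ • f'' ξ + (g' ξ).smulRight (f' ξ))) (add_le_add t1 t2)

lemma der_clm_pack (A : H →L[ℝ] ℝ) (hA : ‖A‖ ≤ 1) :
    ∃ h' h'', Der2 (fun ξ : H => A ξ) h' h'' ∧ (∀ ξ, |A ξ| ≤ ‖ξ‖) ∧
      (∀ ξ, ‖h' ξ‖ ≤ 1) ∧ (∀ ξ, ‖h'' ξ‖ ≤ 0) := by
  refine ⟨_, _, Der2.clm A, ?_, fun ξ => hA, fun ξ => le_of_eq ContinuousLinearMap.opNorm_zero⟩
  intro ξ
  calc |A ξ| ≤ ‖A‖ * ‖ξ‖ := A.le_opNorm ξ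
    _ ≤ 1 * ‖ξ‖ := by gcongr
    _ = ‖ξ‖ := one_mul _

end MulPack

section BlockPack
variable {ι : Type*} [Fintype ι] {F : Type*} [NormedAddCommGroup F] [NormedSpace ℝ F]

lemma der_block (h : ι → F → ℝ) (v b c : F → ℝ)
    (hd : ∀ r, ∃ h' h'', Der2 (h r) h' h'' ∧ (∀ ξ, |h r ξ| ≤ v ξ) ∧ (∀ ξ, ‖h' ξ‖ ≤ b ξ) ∧
      (∀ ξ, ‖h'' ξ‖ ≤ c ξ)) :
    ∃ D1 D2, Der2 (fun θ : PiLp 2 (fun _ : ι => F) => ∑ r, h r (θ r)) D1 D2 ∧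
      (∀ θ : PiLp 2 (fun _ : ι => F), |∑ r, h r (θ r)| ≤ ∑ r, v (θ r)) ∧
      (∀ θ : PiLp 2 (fun _ : ι => F), ‖D1 θ‖ ≤ Real.sqrt (∑ r, (b (θ r))^2)) ∧
      (∀ (θ : PiLp 2 (fun _ : ι => F)) (K : ℝ), 0 ≤ K → (∀ r, c (θ r) ≤ K) → ‖D2 θ‖ ≤ K) := by
  choose h' h'' hder hv hb hc using hd
  refine ⟨_, _, Der2.sum (s := Finset.univ)
    (fun r _ => Der2.comp_clm (hder r) (PiLp.proj 2 (fun _ : ι => F) r)), ?_, ?_, ?_⟩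
  · intro θ
    refine le_trans (Finset.abs_sum_le_sum_abs _ _) (Finset.sum_le_sum fun r _ => ?_)
    exact hv r (θ r)
  · intro θ
    exact block1_norm (fun r => b (θ r)) (fun r => h' r (θ r)) (fun r => hb r (θ r))
  · intro θ K hK0 hK
    exact block2_norm K hK0 (fun r => h'' r (θ r))
      (fun r => le_trans (hc r (θ r)) (hK r))

end BlockPack
variable {d : ℕ}

noncomputable def Amap (d : ℕ) : WithLp 2 (ℝ × EuclideanSpace ℝ (Fin d)) →L[ℝ] ℝ :=
  (ContinuousLinearMap.fst ℝ ℝ (EuclideanSpace ℝ (Fin d))).comp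
    ((WithLp.prodContinuousLinearEquiv 2 ℝ ℝ (EuclideanSpace ℝ (Fin d))) :
      WithLp 2 (ℝ × EuclideanSpace ℝ (Fin d)) →L[ℝ] ℝ × EuclideanSpace ℝ (Fin d))

noncomputable def Lmap (d : ℕ) (x : EuclideanSpace ℝ (Fin d)) :
    WithLp 2 (ℝ × EuclideanSpace ℝ (Fin d)) →L[ℝ] ℝ :=
  (innerSL ℝ x).comp ((ContinuousLinearMap.snd ℝ ℝ (EuclideanSpace ℝ (Fin d))).comp
    ((WithLp.prodContinuousLinearEquiv 2 ℝ ℝ (EuclideanSpace ℝ (Fin d))) :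
      WithLp 2 (ℝ × EuclideanSpace ℝ (Fin d)) →L[ℝ] ℝ × EuclideanSpace ℝ (Fin d)))

lemma Amap_apply (ξ : WithLp 2 (ℝ × EuclideanSpace ℝ (Fin d))) : Amap d ξ = ξ.fst := rfl
lemma Lmap_apply (x : EuclideanSpace ℝ (Fin d)) (ξ : WithLp 2 (ℝ × EuclideanSpace ℝ (Fin d))) :
    Lmap d x ξ = ⟪x, ξ.snd⟫ := rfl

lemma coord_fst_le (ξ : WithLp 2 (ℝ × EuclideanSpace ℝ (Fin d))) : |ξ.fst| ≤ ‖ξ‖ := by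
  have h := WithLp.prod_norm_sq_eq_of_L2 ξ
  have h1 : ‖ξ.fst‖^2 ≤ ‖ξ‖^2 := by nlinarith [sq_nonneg ‖ξ.snd‖]
  have := norm_nonneg ξ; have := norm_nonneg ξ.fst
  rw [show |ξ.fst| = ‖ξ.fst‖ from rfl]
  nlinarith

lemma coord_snd_le (ξ : WithLp 2 (ℝ × EuclideanSpace ℝ (Fin d))) : ‖ξ.snd‖ ≤ ‖ξ‖ := by
  have h := WithLp.prod_norm_sq_eq_of_L2 ξ
  have h1 : ‖ξ.snd‖^2 ≤ ‖ξ‖^2 := by nlinarith [sq_nonneg ‖ξ.fst‖]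
  have := norm_nonneg ξ; have := norm_nonneg ξ.snd
  nlinarith

lemma Amap_norm : ‖Amap d‖ ≤ 1 := by
  apply ContinuousLinearMap.opNorm_le_bound _ zero_le_one
  intro ξ
  rw [one_mul, Amap_apply]
  exact coord_fst_le ξ

lemma Lmap_norm (x : EuclideanSpace ℝ (Fin d)) (hx : ‖x‖ ≤ 1) : ‖Lmap d x‖ ≤ 1 := by
  apply ContinuousLinearMap.opNorm_le_bound _ zero_le_one
  intro ξ
  rw [one_mul, Lmap_apply]
  calc |⟪x, ξ.snd⟫| ≤ ‖x‖ * ‖ξ.snd‖ := abs_real_inner_le_norm x ξ.snd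
    _ ≤ 1 * ‖ξ‖ := mul_le_mul hx (coord_snd_le ξ) (norm_nonneg _) zero_le_one
    _ = ‖ξ‖ := one_mul _

noncomputable def dualIso (E : Type*) [NormedAddCommGroup E] [InnerProductSpace ℝ E]
    [CompleteSpace E] : StrongDual ℝ E →L[ℝ] E :=
  LinearMap.mkContinuous
    { toFun := fun w => (InnerProductSpace.toDual ℝ E).symm w
      map_add' := fun a b => map_add _ a b
      map_smul' := fun r a => by
        simp only [RingHom.id_apply]
        rw [LinearIsometryEquiv.map_smulₛₗ]
        simp }
    1 (fun w => by simp [LinearIsometryEquiv.norm_map])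

lemma dualIso_apply (E : Type*) [NormedAddCommGroup E] [InnerProductSpace ℝ E]
    [CompleteSpace E] (w : StrongDual ℝ E) :
    dualIso E w = (InnerProductSpace.toDual ℝ E).symm w := rfl

lemma dualIso_norm_map (E : Type*) [NormedAddCommGroup E] [InnerProductSpace ℝ E]
    [CompleteSpace E] (w : StrongDual ℝ E) : ‖dualIso E w‖ = ‖w‖ := by
  rw [dualIso_apply]; exact LinearIsometryEquiv.norm_map _ w

lemma one_add_pow_six_le (t : ℝ) (ht : 0 ≤ t) : (1+t)^6 ≤ 64*(1+t^6) := by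
  have key : ∀ k : ℕ, k ≤ 6 → t^k ≤ 1 + t^6 := by
    intro k hk
    rcases le_total t 1 with h | h
    · have : t^k ≤ 1 := pow_le_one₀ ht h
      have : (0:ℝ) ≤ t^6 := pow_nonneg ht 6
      linarith
    · have : t^k ≤ t^6 := pow_le_pow_right₀ h hk
      linarith
  have h1 := key 1 (by norm_num)
  have h2 := key 2 (by norm_num)
  have h3 := key 3 (by norm_num)
  have h4 := key 4 (by norm_num)
  have h5 := key 5 (by norm_num)
  have e1 : t^1 = t := pow_one t
  nlinarith [h1, h2, h3, h4, h5]

/-- Hessian–gradient product bound for the modified dropout loss: for a smooth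
1-Lipschitz activation with `σ(0) = 0` and bounded second derivative (by `M`),
and data bounded by 1, there is `C > 0` such that
`‖∇²_θ L_S(θ) · ∇_θ L_S(θ)‖₂ ≤ C (1 + ‖θ‖₂⁶)` for all `θ`. -/
theorem stmt_11 (p M : ℝ) (hp : 0 < p) (hp1 : p < 1) (hM : 0 ≤ M) :
    ∃ C : ℝ, 0 < C ∧
      ∀ (d m n : ℕ) (σ : ℝ → ℝ), ContDiff ℝ 2 σ → LipschitzWith 1 σ → σ 0 = 0 →
        (∀ t : ℝ, |deriv (deriv σ) t| ≤ M) →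
      ∀ (x : Fin n → EuclideanSpace ℝ (Fin d)) (y : Fin n → ℝ),
        (∀ i, ‖x i‖ ≤ 1) → (∀ i, |y i| ≤ 1) →
      ∀ θ : PiLp 2 (fun _ : Fin m => WithLp 2 (ℝ × EuclideanSpace ℝ (Fin d))),
        let LS : PiLp 2 (fun _ : Fin m => WithLp 2 (ℝ × EuclideanSpace ℝ (Fin d))) → ℝ :=
          fun θ' =>
            (1 / (2 * (n : ℝ))) * ∑ i,
              ((∑ r, (WithLp.equiv 2 (ℝ × EuclideanSpace ℝ (Fin d)) (θ' r)).1 *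
                  σ ⟪(WithLp.equiv 2 (ℝ × EuclideanSpace ℝ (Fin d)) (θ' r)).2, x i⟫) - y i) ^ 2
            + ((1 - p) / (2 * (n : ℝ) * p)) * ∑ i, ∑ r,
                ((WithLp.equiv 2 (ℝ × EuclideanSpace ℝ (Fin d)) (θ' r)).1) ^ 2 *
                  σ ⟪(WithLp.equiv 2 (ℝ × EuclideanSpace ℝ (Fin d)) (θ' r)).2, x i⟫ ^ 2
        ‖(fderiv ℝ (gradient LS) θ) (gradient LS θ)‖ ≤ C * (1 + ‖θ‖ ^ 6) := by
  set κ := (1 - p) / (2 * p) with hκdef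
  have hκ0 : 0 ≤ κ := div_nonneg (by linarith) (by linarith)
  have hCpos : 0 < 64 * (2 + 4*κ) * ((M + 6) * (1 + 2*κ)) := by
    have h1 : (0:ℝ) < 2+4*κ := by linarith
    have h2 : (0:ℝ) < M+6 := by linarith
    have h3 : (0:ℝ) < 1+2*κ := by linarith
    exact mul_pos (mul_pos (by norm_num) h1) (mul_pos h2 h3)
  refine ⟨64 * (2 + 4*κ) * ((M + 6) * (1 + 2*κ)), hCpos, ?_⟩
  intro d m n σ hσ hlip hσ0 hσM x y hx hy θ
  intro LS
  have hM0 : (0:ℝ) ≤ M := le_trans (abs_nonneg _) (hσM 0)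
  -- packaged per-coordinate data
  have hApack := der_clm_pack (Amap d) Amap_norm
  -- g blocks per sample
  have hgpack : ∀ i : Fin n, ∃ G1 G2,
      Der2 (fun θ' : PiLp 2 (fun _ : Fin m => WithLp 2 (ℝ × EuclideanSpace ℝ (Fin d))) =>
        (∑ r, Amap d (θ' r) * σ (Lmap d (x i) (θ' r))) - y i) G1 G2 ∧
      (∀ θ' : PiLp 2 (fun _ : Fin m => WithLp 2 (ℝ × EuclideanSpace ℝ (Fin d))),
        |(∑ r, Amap d (θ' r) * σ (Lmap d (x i) (θ' r))) - y i| ≤ ‖θ'‖^2 + 1) ∧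
      (∀ θ' : PiLp 2 (fun _ : Fin m => WithLp 2 (ℝ × EuclideanSpace ℝ (Fin d))),
        ‖G1 θ'‖ ≤ 2*‖θ'‖) ∧
      (∀ θ' : PiLp 2 (fun _ : Fin m => WithLp 2 (ℝ × EuclideanSpace ℝ (Fin d))),
        ‖G2 θ'‖ ≤ M*‖θ'‖ + 2) := by
    intro i
    obtain ⟨D1, D2, hD, hDv, hD1, hD2⟩ :=
      der_block (fun _ : Fin m => fun ξ => Amap d ξ * σ (Lmap d (x i) ξ))
        (fun ξ => ‖ξ‖^2) (fun ξ => 2*‖ξ‖) (fun ξ => M*‖ξ‖+2)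
        (fun _ => der_hE hσ hlip hσ0 hσM (Amap d) (Lmap d (x i)) Amap_norm
          (Lmap_norm (x i) (hx i)))
    refine ⟨D1, D2, hD.sub_const (y i), ?_, ?_, ?_⟩
    · intro θ'
      have h1 : |∑ r, Amap d (θ' r) * σ (Lmap d (x i) (θ' r))| ≤ ∑ r, ‖θ' r‖^2 := hDv θ'
      have h2 : ∑ r, ‖θ' r‖^2 = ‖θ'‖^2 := (PiLp.norm_sq_eq_of_L2 _ θ').symm
      have h3 := hy i
      calc |(∑ r, Amap d (θ' r) * σ (Lmap d (x i) (θ' r))) - y i|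
          ≤ |∑ r, Amap d (θ' r) * σ (Lmap d (x i) (θ' r))| + |y i| := abs_sub _ _
        _ ≤ ‖θ'‖^2 + 1 := by rw [← h2]; exact add_le_add h1 h3
    · intro θ'
      refine le_trans (hD1 θ') ?_
      have h1 : ∑ r, (2*‖θ' r‖)^2 ≤ (2*‖θ'‖)^2 := by
        have hh := PiLp.norm_sq_eq_of_L2 (fun _ : Fin m => WithLp 2 (ℝ × EuclideanSpace ℝ (Fin d))) θ'
        have e1 : ∑ r, (2*‖θ' r‖)^2 = 4 * ∑ r, ‖θ' r‖^2 := by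
          rw [Finset.mul_sum]; exact Finset.sum_congr rfl fun r _ => by ring
        rw [e1, ← hh]; nlinarith [Finset.sum_nonneg (fun r (_ : r ∈ Finset.univ) => sq_nonneg ‖θ' r‖)]
      calc Real.sqrt (∑ r, (2*‖θ' r‖)^2) ≤ Real.sqrt ((2*‖θ'‖)^2) := Real.sqrt_le_sqrt h1
        _ = 2*‖θ'‖ := Real.sqrt_sq (by positivity)
    · intro θ'
      refine hD2 θ' (M*‖θ'‖+2) (by positivity) fun r => ?_
      have := pilp_norm_coord θ' r
      nlinarith
  -- Q blocks per sample
  have hQpack : ∀ i : Fin n, ∃ Q1 Q2,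
      Der2 (fun θ' : PiLp 2 (fun _ : Fin m => WithLp 2 (ℝ × EuclideanSpace ℝ (Fin d))) =>
        ∑ r, (Amap d (θ' r) * Amap d (θ' r)) *
          (σ (Lmap d (x i) (θ' r)) * σ (Lmap d (x i) (θ' r)))) Q1 Q2 ∧
      (∀ θ' : PiLp 2 (fun _ : Fin m => WithLp 2 (ℝ × EuclideanSpace ℝ (Fin d))),
        ‖Q1 θ'‖ ≤ 4*‖θ'‖^3) ∧
      (∀ θ' : PiLp 2 (fun _ : Fin m => WithLp 2 (ℝ × EuclideanSpace ℝ (Fin d))),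
        ‖Q2 θ'‖ ≤ 2*M*‖θ'‖^3 + 12*‖θ'‖^2) := by
    intro i
    have hψ := der_psi hσ hlip hσ0 hσM (Lmap d (x i)) (Lmap_norm (x i) (hx i))
    have hA2 := der_mul_pack hApack hApack
    have hS2 := der_mul_pack hψ hψ
    have hQraw := der_mul_pack hA2 hS2
    -- weaken the bounds
    have hQclean : ∃ h' h'', Der2 (fun ξ => (Amap d ξ * Amap d ξ) *
        (σ (Lmap d (x i) ξ) * σ (Lmap d (x i) ξ))) h' h'' ∧
        (∀ ξ, |(Amap d ξ * Amap d ξ) * (σ (Lmap d (x i) ξ) * σ (Lmap d (x i) ξ))| ≤ ‖ξ‖^4) ∧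
        (∀ ξ, ‖h' ξ‖ ≤ 4*‖ξ‖^3) ∧ (∀ ξ, ‖h'' ξ‖ ≤ 2*M*‖ξ‖^3 + 12*‖ξ‖^2) := by
      obtain ⟨h', h'', hder, hv, hb, hc⟩ := hQraw
      refine ⟨h', h'', hder, fun ξ => le_trans (hv ξ) (by nlinarith [norm_nonneg ξ]),
        fun ξ => le_trans (hb ξ) (by nlinarith [norm_nonneg ξ]),
        fun ξ => le_trans (hc ξ) (by nlinarith [norm_nonneg ξ])⟩
    obtain ⟨h', h'', hder, hv, hb, hc⟩ := hQclean
    obtain ⟨D1, D2, hD, hDv, hD1, hD2⟩ :=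
      der_block (fun _ : Fin m => fun ξ => (Amap d ξ * Amap d ξ) *
          (σ (Lmap d (x i) ξ) * σ (Lmap d (x i) ξ)))
        (fun ξ => ‖ξ‖^4) (fun ξ => 4*‖ξ‖^3) (fun ξ => 2*M*‖ξ‖^3 + 12*‖ξ‖^2)
        (fun _ => ⟨h', h'', hder, hv, hb, hc⟩)
    refine ⟨D1, D2, hD, ?_, ?_⟩
    · intro θ'
      refine le_trans (hD1 θ') ?_
      have hsq := PiLp.norm_sq_eq_of_L2 (fun _ : Fin m => WithLp 2 (ℝ × EuclideanSpace ℝ (Fin d))) θ'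
      have h1 : ∑ r, (4*‖θ' r‖^3)^2 ≤ (4*‖θ'‖^3)^2 := by
        have hcube : ∑ r, (‖θ' r‖^2)^3 ≤ (∑ r, ‖θ' r‖^2)^3 :=
          sum_cube_le _ (fun r => sq_nonneg _)
        calc ∑ r, (4*‖θ' r‖^3)^2 = 16 * ∑ r, (‖θ' r‖^2)^3 := by
              rw [Finset.mul_sum]; exact Finset.sum_congr rfl fun r _ => by ring
          _ ≤ 16 * (∑ r, ‖θ' r‖^2)^3 := by linarith
          _ = 16 * (‖θ'‖^2)^3 := by rw [← hsq]
          _ = (4*‖θ'‖^3)^2 := by ring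
      calc Real.sqrt (∑ r, (4*‖θ' r‖^3)^2) ≤ Real.sqrt ((4*‖θ'‖^3)^2) := Real.sqrt_le_sqrt h1
        _ = 4*‖θ'‖^3 := Real.sqrt_sq (by positivity)
    · intro θ'
      refine hD2 θ' (2*M*‖θ'‖^3 + 12*‖θ'‖^2) (by positivity) fun r => ?_
      have h1 := pilp_norm_coord θ' r
      have h2 : (0:ℝ) ≤ ‖θ' r‖ := norm_nonneg _
      have h3 : (0:ℝ) ≤ ‖θ'‖ := norm_nonneg _
      have h4 : ‖θ' r‖^3 ≤ ‖θ'‖^3 := by exact pow_le_pow_left₀ h2 h1 _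
      have h5 : ‖θ' r‖^2 ≤ ‖θ'‖^2 := by exact pow_le_pow_left₀ h2 h1 _
      nlinarith
  -- choose the block data
  choose G1 G2 hGder hGv hG1 hG2 using hgpack
  have hPpack : ∀ i : Fin n, ∃ P1 P2,
      Der2 (fun θ' : PiLp 2 (fun _ : Fin m => WithLp 2 (ℝ × EuclideanSpace ℝ (Fin d))) =>
        ((∑ r, Amap d (θ' r) * σ (Lmap d (x i) (θ' r))) - y i) *
        ((∑ r, Amap d (θ' r) * σ (Lmap d (x i) (θ' r))) - y i)) P1 P2 ∧
      (∀ θ' : PiLp 2 (fun _ : Fin m => WithLp 2 (ℝ × EuclideanSpace ℝ (Fin d))),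
        |(((∑ r, Amap d (θ' r) * σ (Lmap d (x i) (θ' r))) - y i) *
          ((∑ r, Amap d (θ' r) * σ (Lmap d (x i) (θ' r))) - y i))| ≤ (‖θ'‖^2+1) * (‖θ'‖^2+1)) ∧
      (∀ θ' : PiLp 2 (fun _ : Fin m => WithLp 2 (ℝ × EuclideanSpace ℝ (Fin d))),
        ‖P1 θ'‖ ≤ (‖θ'‖^2+1)*(2*‖θ'‖) + (‖θ'‖^2+1)*(2*‖θ'‖)) ∧
      (∀ θ' : PiLp 2 (fun _ : Fin m => WithLp 2 (ℝ × EuclideanSpace ℝ (Fin d))),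
        ‖P2 θ'‖ ≤ ((‖θ'‖^2+1)*(M*‖θ'‖+2) + (2*‖θ'‖)*(2*‖θ'‖)) +
          ((‖θ'‖^2+1)*(M*‖θ'‖+2) + (2*‖θ'‖)*(2*‖θ'‖))) :=
    fun i => der_mul_pack ⟨G1 i, G2 i, hGder i, hGv i, hG1 i, hG2 i⟩
      ⟨G1 i, G2 i, hGder i, hGv i, hG1 i, hG2 i⟩
  choose P1 P2 hPder hPv hP1 hP2 using hPpack
  choose Q1 Q2 hQder hQ1 hQ2 using hQpack
  -- assemble the full derivative data
  have hLSder := Der2.add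
    (Der2.const_mul (Der2.sum (s := Finset.univ) (fun i _ => hPder i)) (1 / (2 * (n:ℝ))))
    (Der2.const_mul (Der2.sum (s := Finset.univ) (fun i _ => hQder i)) ((1-p) / (2 * (n:ℝ) * p)))
  -- coefficient estimates
  have hn1 : |1 / (2 * (n:ℝ))| * n ≤ 1/2 := by
    rcases Nat.eq_zero_or_pos n with h | h
    · subst h; simp
    · have hn : (0:ℝ) < n := by exact_mod_cast h
      rw [abs_of_nonneg (by positivity)]
      rw [div_mul_eq_mul_div, one_mul, div_le_iff₀ (by positivity)]
      ring_nf; nlinarith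
  have hn2 : |(1-p) / (2 * (n:ℝ) * p)| * n ≤ κ := by
    rcases Nat.eq_zero_or_pos n with h | h
    · subst h; simp [hκ0]
    · have hn : (0:ℝ) < n := by exact_mod_cast h
      have : |(1-p) / (2 * (n:ℝ) * p)| = (1-p) / (2 * (n:ℝ) * p) :=
        abs_of_nonneg (div_nonneg (by linarith) (by positivity))
      rw [this, hκdef, div_mul_eq_mul_div, div_le_div_iff₀ (by positivity) (by positivity)]
      ring_nf; nlinarith
  -- sum bounds at θ
  have hSP1 : ‖∑ i, P1 i θ‖ ≤ (n:ℝ) * ((‖θ‖^2+1)*(2*‖θ‖) + (‖θ‖^2+1)*(2*‖θ‖)) := by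
    refine le_trans (norm_sum_le Finset.univ (fun i => P1 i θ)) ?_
    calc ∑ i, ‖P1 i θ‖ ≤ ∑ _i : Fin n, ((‖θ‖^2+1)*(2*‖θ‖) + (‖θ‖^2+1)*(2*‖θ‖)) :=
          Finset.sum_le_sum (fun i _ => hP1 i θ)
      _ = (n:ℝ) * ((‖θ‖^2+1)*(2*‖θ‖) + (‖θ‖^2+1)*(2*‖θ‖)) := by
          rw [Finset.sum_const, Finset.card_univ, Fintype.card_fin, nsmul_eq_mul]
  have hSQ1 : ‖∑ i, Q1 i θ‖ ≤ (n:ℝ) * (4*‖θ‖^3) := by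
    refine le_trans (norm_sum_le Finset.univ (fun i => Q1 i θ)) ?_
    calc ∑ i, ‖Q1 i θ‖ ≤ ∑ _i : Fin n, (4*‖θ‖^3) := Finset.sum_le_sum (fun i _ => hQ1 i θ)
      _ = (n:ℝ) * (4*‖θ‖^3) := by
          rw [Finset.sum_const, Finset.card_univ, Fintype.card_fin, nsmul_eq_mul]
  have hSP2 : ‖∑ i, P2 i θ‖ ≤ (n:ℝ) * (((‖θ‖^2+1)*(M*‖θ‖+2) + (2*‖θ‖)*(2*‖θ‖)) +
      ((‖θ‖^2+1)*(M*‖θ‖+2) + (2*‖θ‖)*(2*‖θ‖))) := by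
    refine le_trans (norm_sum_le Finset.univ (fun i => P2 i θ)) ?_
    calc ∑ i, ‖P2 i θ‖ ≤ ∑ _i : Fin n, (((‖θ‖^2+1)*(M*‖θ‖+2) + (2*‖θ‖)*(2*‖θ‖)) +
          ((‖θ‖^2+1)*(M*‖θ‖+2) + (2*‖θ‖)*(2*‖θ‖))) := Finset.sum_le_sum (fun i _ => hP2 i θ)
      _ = _ := by rw [Finset.sum_const, Finset.card_univ, Fintype.card_fin, nsmul_eq_mul]
  have hSQ2 : ‖∑ i, Q2 i θ‖ ≤ (n:ℝ) * (2*M*‖θ‖^3 + 12*‖θ‖^2) := by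
    refine le_trans (norm_sum_le Finset.univ (fun i => Q2 i θ)) ?_
    calc ∑ i, ‖Q2 i θ‖ ≤ ∑ _i : Fin n, (2*M*‖θ‖^3 + 12*‖θ‖^2) :=
          Finset.sum_le_sum (fun i _ => hQ2 i θ)
      _ = _ := by rw [Finset.sum_const, Finset.card_univ, Fintype.card_fin, nsmul_eq_mul]
  have htnn : (0:ℝ) ≤ ‖θ‖ := norm_nonneg θ
  -- bounds on the first and second derivative of LS at θ
  have hF1 : ‖(1 / (2 * (n:ℝ))) • (∑ i, P1 i θ) + ((1-p) / (2 * (n:ℝ) * p)) • (∑ i, Q1 i θ)‖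
      ≤ (2+4*κ) * (1+‖θ‖)^3 := by
    have s1 : ‖(1 / (2 * (n:ℝ))) • (∑ i, P1 i θ)‖ ≤ |1 / (2 * (n:ℝ))| * ‖∑ i, P1 i θ‖ := by
      refine le_trans (ContinuousLinearMap.opNorm_smul_le _ _) ?_
      rw [Real.norm_eq_abs]
    have s2 : ‖((1-p) / (2 * (n:ℝ) * p)) • (∑ i, Q1 i θ)‖
        ≤ |(1-p) / (2 * (n:ℝ) * p)| * ‖∑ i, Q1 i θ‖ := by
      refine le_trans (ContinuousLinearMap.opNorm_smul_le _ _) ?_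
      rw [Real.norm_eq_abs]
    have t1 : |1 / (2 * (n:ℝ))| * ‖∑ i, P1 i θ‖
        ≤ (1/2) * ((‖θ‖^2+1)*(2*‖θ‖) + (‖θ‖^2+1)*(2*‖θ‖)) := by
      have := mul_le_mul_of_nonneg_left hSP1 (abs_nonneg (1 / (2 * (n:ℝ))))
      have h2 := mul_le_mul_of_nonneg_right hn1 (show (0:ℝ) ≤ (‖θ‖^2+1)*(2*‖θ‖) + (‖θ‖^2+1)*(2*‖θ‖) by positivity)
      nlinarith
    have t2 : |(1-p) / (2 * (n:ℝ) * p)| * ‖∑ i, Q1 i θ‖ ≤ κ * (4*‖θ‖^3) := by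
      have := mul_le_mul_of_nonneg_left hSQ1 (abs_nonneg ((1-p) / (2 * (n:ℝ) * p)))
      have h2 := mul_le_mul_of_nonneg_right hn2 (show (0:ℝ) ≤ 4*‖θ‖^3 by positivity)
      nlinarith
    have := norm_add_le ((1 / (2 * (n:ℝ))) • (∑ i, P1 i θ))
      (((1-p) / (2 * (n:ℝ) * p)) • (∑ i, Q1 i θ))
    nlinarith [mul_nonneg hκ0 (pow_nonneg htnn 3), pow_nonneg htnn 2, pow_nonneg htnn 3,
      mul_nonneg hκ0 htnn, mul_nonneg hκ0 (pow_nonneg htnn 2)]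
  have hF2 : ‖(1 / (2 * (n:ℝ))) • (∑ i, P2 i θ) + ((1-p) / (2 * (n:ℝ) * p)) • (∑ i, Q2 i θ)‖
      ≤ (M+6) * (1+2*κ) * (1+‖θ‖)^3 := by
    have s1 : ‖(1 / (2 * (n:ℝ))) • (∑ i, P2 i θ)‖ ≤ |1 / (2 * (n:ℝ))| * ‖∑ i, P2 i θ‖ := by
      refine le_trans (ContinuousLinearMap.opNorm_smul_le _ _) ?_
      rw [Real.norm_eq_abs]
    have s2 : ‖((1-p) / (2 * (n:ℝ) * p)) • (∑ i, Q2 i θ)‖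
        ≤ |(1-p) / (2 * (n:ℝ) * p)| * ‖∑ i, Q2 i θ‖ := by
      refine le_trans (ContinuousLinearMap.opNorm_smul_le _ _) ?_
      rw [Real.norm_eq_abs]
    have t1 : |1 / (2 * (n:ℝ))| * ‖∑ i, P2 i θ‖
        ≤ (1/2) * ((((‖θ‖^2+1)*(M*‖θ‖+2) + (2*‖θ‖)*(2*‖θ‖)) +
          (((‖θ‖^2+1)*(M*‖θ‖+2) + (2*‖θ‖)*(2*‖θ‖))))) := by
      have := mul_le_mul_of_nonneg_left hSP2 (abs_nonneg (1 / (2 * (n:ℝ))))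
      have h2 := mul_le_mul_of_nonneg_right hn1 (show (0:ℝ) ≤ ((‖θ‖^2+1)*(M*‖θ‖+2) +
        (2*‖θ‖)*(2*‖θ‖)) + ((‖θ‖^2+1)*(M*‖θ‖+2) + (2*‖θ‖)*(2*‖θ‖)) by positivity)
      nlinarith
    have t2 : |(1-p) / (2 * (n:ℝ) * p)| * ‖∑ i, Q2 i θ‖ ≤ κ * (2*M*‖θ‖^3 + 12*‖θ‖^2) := by
      have := mul_le_mul_of_nonneg_left hSQ2 (abs_nonneg ((1-p) / (2 * (n:ℝ) * p)))
      have h2 := mul_le_mul_of_nonneg_right hn2 (show (0:ℝ) ≤ 2*M*‖θ‖^3 + 12*‖θ‖^2 by positivity)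
      nlinarith
    have := norm_add_le ((1 / (2 * (n:ℝ))) • (∑ i, P2 i θ))
      (((1-p) / (2 * (n:ℝ) * p)) • (∑ i, Q2 i θ))
    nlinarith [mul_nonneg hκ0 (pow_nonneg htnn 3), pow_nonneg htnn 2, pow_nonneg htnn 3,
      mul_nonneg hκ0 htnn, mul_nonneg hκ0 (pow_nonneg htnn 2),
      mul_nonneg hM0 (pow_nonneg htnn 3), mul_nonneg hM0 (pow_nonneg htnn 2),
      mul_nonneg hM0 htnn, mul_nonneg hκ0 hM0,
      mul_nonneg (mul_nonneg hκ0 hM0) (pow_nonneg htnn 3),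
      mul_nonneg (mul_nonneg hκ0 hM0) (pow_nonneg htnn 2),
      mul_nonneg (mul_nonneg hκ0 hM0) htnn]
  -- rewrite LS into the analysed form
  have hAL : ∀ (ξ : WithLp 2 (ℝ × EuclideanSpace ℝ (Fin d))) (i : Fin n),
      (WithLp.equiv 2 (ℝ × EuclideanSpace ℝ (Fin d)) ξ).1 *
        σ ⟪(WithLp.equiv 2 (ℝ × EuclideanSpace ℝ (Fin d)) ξ).2, x i⟫ =
      Amap d ξ * σ (Lmap d (x i) ξ) := by
    intro ξ i
    rw [Amap_apply, Lmap_apply]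
    rw [real_inner_comm]
    rfl
  have hQL : ∀ (ξ : WithLp 2 (ℝ × EuclideanSpace ℝ (Fin d))) (i : Fin n),
      ((WithLp.equiv 2 (ℝ × EuclideanSpace ℝ (Fin d)) ξ).1) ^ 2 *
        σ ⟪(WithLp.equiv 2 (ℝ × EuclideanSpace ℝ (Fin d)) ξ).2, x i⟫ ^ 2 =
      (Amap d ξ * Amap d ξ) * (σ (Lmap d (x i) ξ) * σ (Lmap d (x i) ξ)) := by
    intro ξ i
    rw [Amap_apply, Lmap_apply]
    rw [real_inner_comm]
    show ξ.fst ^ 2 * σ ⟪x i, ξ.snd⟫ ^ 2 = _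
    ring
  have hLSeq : LS = (fun θ' : PiLp 2 (fun _ : Fin m => WithLp 2 (ℝ × EuclideanSpace ℝ (Fin d))) =>
      (1 / (2 * (n:ℝ))) * ∑ i, (((∑ r, Amap d (θ' r) * σ (Lmap d (x i) (θ' r))) - y i) *
        ((∑ r, Amap d (θ' r) * σ (Lmap d (x i) (θ' r))) - y i)) +
      ((1-p) / (2 * (n:ℝ) * p)) * ∑ i, ∑ r, (Amap d (θ' r) * Amap d (θ' r)) *
        (σ (Lmap d (x i) (θ' r)) * σ (Lmap d (x i) (θ' r)))) := by
    funext θ'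
    show (1 / (2 * (n : ℝ))) * ∑ i,
        ((∑ r, (WithLp.equiv 2 (ℝ × EuclideanSpace ℝ (Fin d)) (θ' r)).1 *
            σ ⟪(WithLp.equiv 2 (ℝ × EuclideanSpace ℝ (Fin d)) (θ' r)).2, x i⟫) - y i) ^ 2
      + ((1 - p) / (2 * (n : ℝ) * p)) * ∑ i, ∑ r,
          ((WithLp.equiv 2 (ℝ × EuclideanSpace ℝ (Fin d)) (θ' r)).1) ^ 2 *
            σ ⟪(WithLp.equiv 2 (ℝ × EuclideanSpace ℝ (Fin d)) (θ' r)).2, x i⟫ ^ 2 = _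
    simp only [hQL]
    simp only [hAL]
    simp only [pow_two]
  rw [hLSeq]
  -- gradient and Hessian via the explicit derivative data
  obtain ⟨hder1, hder2⟩ := hLSder
  have hgradz : ∀ z, gradient (fun θ' : PiLp 2 (fun _ : Fin m =>
      WithLp 2 (ℝ × EuclideanSpace ℝ (Fin d))) =>
      (1 / (2 * (n:ℝ))) * ∑ i, (((∑ r, Amap d (θ' r) * σ (Lmap d (x i) (θ' r))) - y i) *
        ((∑ r, Amap d (θ' r) * σ (Lmap d (x i) (θ' r))) - y i)) +
      ((1-p) / (2 * (n:ℝ) * p)) * ∑ i, ∑ r, (Amap d (θ' r) * Amap d (θ' r)) *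
        (σ (Lmap d (x i) (θ' r)) * σ (Lmap d (x i) (θ' r)))) z =
      dualIso _ ((1 / (2 * (n:ℝ))) • (∑ i, P1 i z) + ((1-p) / (2 * (n:ℝ) * p)) • (∑ i, Q1 i z)) := by
    intro z
    refine HasGradientAt.gradient ?_
    rw [hasGradientAt_iff_hasFDerivAt, dualIso_apply, LinearIsometryEquiv.apply_symm_apply]
    exact hder1 z
  have hgfun := funext hgradz
  have hdG : HasFDerivAt (gradient (fun θ' : PiLp 2 (fun _ : Fin m =>
      WithLp 2 (ℝ × EuclideanSpace ℝ (Fin d))) =>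
      (1 / (2 * (n:ℝ))) * ∑ i, (((∑ r, Amap d (θ' r) * σ (Lmap d (x i) (θ' r))) - y i) *
        ((∑ r, Amap d (θ' r) * σ (Lmap d (x i) (θ' r))) - y i)) +
      ((1-p) / (2 * (n:ℝ) * p)) * ∑ i, ∑ r, (Amap d (θ' r) * Amap d (θ' r)) *
        (σ (Lmap d (x i) (θ' r)) * σ (Lmap d (x i) (θ' r)))))
      ((dualIso _).comp ((1 / (2 * (n:ℝ))) • (∑ i, P2 i θ) +
        ((1-p) / (2 * (n:ℝ) * p)) • (∑ i, Q2 i θ))) θ := by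
    rw [hgfun]
    exact (dualIso _).hasFDerivAt.comp θ (hder2 θ)
  rw [hdG.fderiv]
  rw [ContinuousLinearMap.comp_apply, dualIso_norm_map]
  have hgθ : ‖gradient (fun θ' : PiLp 2 (fun _ : Fin m =>
      WithLp 2 (ℝ × EuclideanSpace ℝ (Fin d))) =>
      (1 / (2 * (n:ℝ))) * ∑ i, (((∑ r, Amap d (θ' r) * σ (Lmap d (x i) (θ' r))) - y i) *
        ((∑ r, Amap d (θ' r) * σ (Lmap d (x i) (θ' r))) - y i)) +
      ((1-p) / (2 * (n:ℝ) * p)) * ∑ i, ∑ r, (Amap d (θ' r) * Amap d (θ' r)) *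
        (σ (Lmap d (x i) (θ' r)) * σ (Lmap d (x i) (θ' r)))) θ‖
      ≤ (2+4*κ) * (1+‖θ‖)^3 := by
    rw [hgradz θ, dualIso_norm_map]
    exact hF1
  have hKnn : (0:ℝ) ≤ (2+4*κ) * ((M+6) * (1+2*κ)) := by nlinarith
  calc ‖((1 / (2 * (n:ℝ))) • (∑ i, P2 i θ) + ((1-p) / (2 * (n:ℝ) * p)) • (∑ i, Q2 i θ))
        (gradient _ θ)‖
      ≤ ‖(1 / (2 * (n:ℝ))) • (∑ i, P2 i θ) + ((1-p) / (2 * (n:ℝ) * p)) • (∑ i, Q2 i θ)‖ *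
        ‖gradient _ θ‖ := ContinuousLinearMap.le_opNorm _ _
    _ ≤ ((M+6) * (1+2*κ) * (1+‖θ‖)^3) * ((2+4*κ) * (1+‖θ‖)^3) := by
        refine mul_le_mul hF2 hgθ (norm_nonneg _) ?_
        positivity
    _ = ((2+4*κ) * ((M+6) * (1+2*κ))) * (1+‖θ‖)^6 := by ring
    _ ≤ ((2+4*κ) * ((M+6) * (1+2*κ))) * (64 * (1+‖θ‖^6)) :=
        mul_le_mul_of_nonneg_left (one_add_pow_six_le ‖θ‖ htnn) hKnn
    _ = 64 * (2 + 4*κ) * ((M + 6) * (1 + 2*κ)) * (1 + ‖θ‖^6) := by ring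
end
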